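/- arXiv:2404.04613 — 4 statements merged into one kernel-verified Lean document; each statement's English description precedes it below -/
import Mathlib

section
/- Let P be a convex n-gon in ℝ² and let k be a natural number with k > n. Then no guard set G ⊆ P with exactly k guards k-covers P. -/
open Set

noncomputable section

/-- The Euclidean plane ℝ². -/
abbrev Plane : Type := EuclideanSpace ℝ (Fin 2)

/-- `P` is a convex `n`-gon with vertex set `V`: `V` is a finite set of exactly `n ≥ 3`
points, `P` is its convex hull, and each point of `V` is an extreme point of `P`. -/
def IsConvexPolygon (n : ℕ) (V : Finset Plane) (P : Set Plane) : Prop :=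
  3 ≤ n ∧ V.card = n ∧ P = convexHull ℝ (V : Set Plane) ∧
    ∀ v ∈ V, v ∈ Set.extremePoints ℝ P

/-- Point `p` is hidden from guard `g` (w.r.t. guard set `G`): some other guard `b ∈ G`
lies strictly between `g` and `p`. -/
def Hidden (G : Finset Plane) (g p : Plane) : Prop :=
  ∃ b ∈ G, b ≠ g ∧ b ∈ openSegment ℝ g p

/-- `G` `k`-covers `P`: every point of `P` is visible from at least `k` guards of `G`. -/
def KCovers (G : Finset Plane) (P : Set Plane) (k : ℕ) : Prop :=
  ∀ p ∈ P, k ≤ {g ∈ (G : Set Plane) | ¬ Hidden G g p}.ncard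

/-- `W` is a wedge: a closed planar convex cone with apex `a` spanned by two
linearly independent directions `u`, `v`. -/
def IsWedge (W : Set Plane) : Prop :=
  ∃ a u v : Plane, LinearIndependent ℝ ![u, v] ∧
    W = {x | ∃ s t : ℝ, 0 ≤ s ∧ 0 ≤ t ∧ x = a + s • u + t • v}


lemma finrank_plane : Module.finrank ℝ Plane = 2 := by
  simp [finrank_euclideanSpace_fin]

/-- parametrized points on a line: middle parameter gives openSegment membership -/
lemma seg_param {a d : Plane} {s r t : ℝ} (h1 : s < r) (h2 : r < t) :
    a + r • d ∈ openSegment ℝ (a + s • d) (a + t • d) := by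
  have hts : (0:ℝ) < t - s := by linarith
  refine ⟨(t - r)/(t - s), (r - s)/(t - s), div_pos (by linarith) hts,
    div_pos (by linarith) hts, ?_, ?_⟩
  · rw [← add_div]; rw [show t - r + (r - s) = t - s by ring, div_self (ne_of_gt hts)]
  · have hts' : t - s ≠ 0 := ne_of_gt hts
    match_scalars <;> field_simp <;> ring

/-- kernel of a nonzero functional on the plane is spanned by any of its
nonzero elements -/
lemma ker_lemma {f : Plane →L[ℝ] ℝ} {d x : Plane} (hf : f ≠ 0) (hd : d ≠ 0)
    (hfd : f d = 0) (hfx : f x = 0) : ∃ t : ℝ, x = t • d := by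
  by_contra h
  push_neg at h
  have hind : LinearIndependent ℝ ![d, x] := by
    rw [LinearIndependent.pair_iff]
    intro s t hst
    rcases eq_or_ne t 0 with ht | ht
    · subst ht
      simp only [smul_zero, add_zero, zero_smul] at hst
      rcases smul_eq_zero.1 hst with h' | h'
      · exact ⟨h', rfl⟩
      · exact absurd h' hd
    · exfalso
      apply h (-(s/t))
      have hts : t • x = -(s • d) := by linear_combination (norm := module) hst
      have h2 : x = t⁻¹ • (t • x) := by rw [smul_smul, inv_mul_cancel₀ ht, one_smul]
      rw [h2, hts, smul_neg, smul_smul, ← neg_smul]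
      congr 1
      field_simp
  have hspan : Submodule.span ℝ {d, x} = ⊤ := by
    apply Submodule.eq_top_of_finrank_eq
    have := finrank_span_eq_card hind
    rw [finrank_plane]
    rw [show ({d, x} : Set Plane) = Set.range ![d, x] by
      simp [Matrix.range_cons, Matrix.range_empty]; rw [Set.pair_comm]]
    rw [this]
    simp
  apply hf
  ext y
  have hy : y ∈ Submodule.span ℝ ({d, x} : Set Plane) := hspan ▸ Submodule.mem_top
  obtain ⟨a, b, hab⟩ := Submodule.mem_span_pair.1 hy
  rw [← hab]
  simp [hfd, hfx]

/-- three directions at a vertex, each supporting, is impossible -/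
lemma three_dirs {d1 d2 d3 : Plane} {f1 f2 f3 : Plane →L[ℝ] ℝ}
    (h11 : f1 d1 = 0) (h22 : f2 d2 = 0) (h33 : f3 d3 = 0)
    (h12 : f1 d2 < 0) (h13 : f1 d3 < 0) (h21 : f2 d1 < 0) (h23 : f2 d3 < 0)
    (h31 : f3 d1 < 0) (h32 : f3 d2 < 0) : False := by
  have hind : LinearIndependent ℝ ![d1, d2] := by
    rw [LinearIndependent.pair_iff]
    intro s t hst
    have e1 : f1 (s • d1 + t • d2) = 0 := by rw [hst]; simp
    have e2 : f2 (s • d1 + t • d2) = 0 := by rw [hst]; simp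
    simp only [map_add, map_smul, smul_eq_mul, h11, h22, mul_zero, add_zero, zero_add] at e1 e2
    constructor
    · rcases mul_eq_zero.1 e2 with h | h
      · exact h
      · exact absurd h (ne_of_lt h21)
    · rcases mul_eq_zero.1 e1 with h | h
      · exact h
      · exact absurd h (ne_of_lt h12)
  have hspan : Submodule.span ℝ {d1, d2} = ⊤ := by
    apply Submodule.eq_top_of_finrank_eq
    have := finrank_span_eq_card hind
    rw [finrank_plane]
    rw [show ({d1, d2} : Set Plane) = Set.range ![d1, d2] by
      simp [Matrix.range_cons, Matrix.range_empty]; rw [Set.pair_comm]]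
    rw [this]
    simp
  obtain ⟨α, β, hd3⟩ := Submodule.mem_span_pair.1
    (hspan ▸ Submodule.mem_top : d3 ∈ Submodule.span ℝ ({d1, d2} : Set Plane))
  have e2 : f2 d3 = α * f2 d1 := by rw [← hd3]; simp [h22]
  have e1 : f1 d3 = β * f1 d2 := by rw [← hd3]; simp [h11]
  have e3 : f3 d3 = α * f3 d1 + β * f3 d2 := by rw [← hd3]; simp
  have hα : 0 < α := by nlinarith
  have hβ : 0 < β := by nlinarith
  nlinarith

/-- three distinct collinear points cannot all be extreme -/
lemma par_case {P : Set Plane} {v x y : Plane}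
    (hv : v ∈ Set.extremePoints ℝ P) (hx : x ∈ Set.extremePoints ℝ P)
    (hy : y ∈ Set.extremePoints ℝ P) (hxv : x ≠ v) (hyv : y ≠ v) (hxy : x ≠ y)
    {lam : ℝ} (hlam : y - v = lam • (x - v)) : False := by
  have hvP : v ∈ P := hv.1
  have hxP : x ∈ P := hx.1
  have hyP : y ∈ P := hy.1
  set d : Plane := x - v with hd
  have hxe : x = v + (1:ℝ) • d := by simp [hd]
  have hye : y = v + lam • d := by rw [hd, ← hlam]; simp
  have hve : v = v + (0:ℝ) • d := by simp
  have hlam0 : lam ≠ 0 := by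
    intro h; apply hyv; rw [hye, h]; simp
  have hlam1 : lam ≠ 1 := by
    intro h; apply hxy.symm; rw [hye, h, ← hxe]
  rcases lt_trichotomy lam 0 with h0 | h0 | h0
  · -- v between y and x : v ∈ openSegment y x
    have hmem := seg_param (a := v) (d := d) h0 zero_lt_one
    rw [← hye, ← hxe] at hmem
    simp only [zero_smul, add_zero] at hmem
    have h1 := hv.2 hyP hxP hmem
    exact hyv h1
  · exact hlam0 h0
  · rcases lt_trichotomy lam 1 with h1 | h1 | h1
    · -- y between v and x
      have hmem := seg_param (a := v) (d := d) h0 h1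
      rw [← hye, ← hxe] at hmem
      simp only [zero_smul, add_zero] at hmem
      have ha := hy.2 hvP hxP hmem
      exact hyv ha.symm
    · exact hlam1 h1
    · -- x between v and y
      have hmem := seg_param (a := v) (d := d) zero_lt_one h1
      rw [← hye, ← hxe] at hmem
      simp only [zero_smul, add_zero] at hmem
      have ha := hx.2 hvP hyP hmem
      exact hxv ha.symm

/-- a linear functional is constant on open segments with equal endpoint values -/
lemma fseg {f : Plane →L[ℝ] ℝ} {x y z : Plane} {c : ℝ}
    (hx : f x = c) (hy : f y = c) (hz : z ∈ openSegment ℝ x y) : f z = c := by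
  obtain ⟨a, b, ha, hb, hab, habz⟩ := hz
  rw [← habz]
  simp only [map_add, map_smul, smul_eq_mul, hx, hy]
  rw [← add_mul, hab, one_mul]

/-- supporting functional at a non-interior point of a convex set -/
lemma exists_support {P : Set Plane} (hconv : Convex ℝ P)
    (hint : (interior P).Nonempty) {b : Plane} (hbP : b ∈ P) (hbni : b ∉ interior P) :
    ∃ f : Plane →L[ℝ] ℝ, f ≠ 0 ∧ ∀ x ∈ P, f x ≤ f b := by
  obtain ⟨f, hf⟩ := geometric_hahn_banach_open_point hconv.interior isOpen_interior hbni
  obtain ⟨a, ha⟩ := hint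
  have hfa : f a < f b := hf a ha
  refine ⟨f, ?_, ?_⟩
  · intro h0; rw [h0] at hfa; simp at hfa
  · intro x hx
    by_contra hgt
    push_neg at hgt
    -- combo of a (interior) and x (in P): t • a + (1-t) • x ∈ interior P
    have key : ∀ t : ℝ, 0 < t → t ≤ 1 → t • a + (1 - t) • x ∈ interior P := by
      intro t ht ht1
      exact hconv.combo_interior_self_mem_interior ha hx ht (by linarith) (by ring)
    have hfax : f a < f x := lt_trans hfa hgt
    set t : ℝ := (f x - f b) / (2 * (f x - f a)) with hT
    have htpos : 0 < t := by apply div_pos <;> linarith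
    have ht1 : t ≤ 1 := by
      rw [div_le_one (by linarith)]; linarith
    have hmem := key t htpos ht1
    have := hf _ hmem
    simp only [map_add, map_smul, smul_eq_mul] at this
    have hexp : t * f a + (1 - t) * f x = f x - t * (f x - f a) := by ring
    rw [hexp] at this
    have hne : f x - f a ≠ 0 := by linarith
    have ht2 : t * (f x - f a) = (f x - f b)/2 := by
      rw [hT]; field_simp
    linarith

/-- a point of `conv V` not in `V`, not interior: lies in the open segment between
two points of `V` on a supporting line -/
lemma witness {V : Finset Plane} {P : Set Plane} (hPeq : P = convexHull ℝ (V : Set Plane))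
    (hconv : Convex ℝ P) (hint : (interior P).Nonempty)
    {b : Plane} (hbP : b ∈ P) (hbni : b ∉ interior P) (hbV : b ∉ V) :
    ∃ (u w : Plane) (f : Plane →L[ℝ] ℝ), u ∈ V ∧ w ∈ V ∧ u ≠ w ∧
      f u = f b ∧ f w = f b ∧ (∀ x ∈ P, f x ≤ f b) ∧ f ≠ 0 ∧
      b ∈ openSegment ℝ u w := by
  classical
  obtain ⟨f, hf0, hfle⟩ := exists_support hconv hint hbP hbni
  set S : Finset Plane := V.filter (fun v => f v = f b) with hSdef
  have hSV : S ⊆ V := Finset.filter_subset _ _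
  have hSval : ∀ s ∈ S, f s = f b := fun s hs => (Finset.mem_filter.1 hs).2
  -- b is a convex combination of S
  have hbV' : b ∈ convexHull ℝ (V : Set Plane) := hPeq ▸ hbP
  rw [Finset.convexHull_eq] at hbV'
  obtain ⟨wt, hwt0, hwt1, hwtc⟩ := hbV' 
  have hbsum : ∑ y ∈ V, wt y • y = b := by
    rw [Finset.centerMass_eq_of_sum_1 _ id hwt1] at hwtc
    simpa using hwtc
  have hfb : ∑ y ∈ V, wt y * f y = f b := by
    have : f (∑ y ∈ V, wt y • y) = f b := by rw [hbsum]
    simpa [map_sum] using this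
  have hzero : ∀ y ∈ V, wt y * (f b - f y) = 0 := by
    have hsum0 : ∑ y ∈ V, wt y * (f b - f y) = 0 := by
      have : ∑ y ∈ V, wt y * (f b - f y) = (∑ y ∈ V, wt y) * f b - ∑ y ∈ V, wt y * f y := by
        rw [Finset.sum_mul, ← Finset.sum_sub_distrib]; congr 1; ext y; ring
      rw [this, hwt1, hfb]; ring
    intro y hy
    have := (Finset.sum_eq_zero_iff_of_nonneg (fun y hy => by
      have h1 := hwt0 y hy
      have h2 : f y ≤ f b := hfle y (hPeq ▸ subset_convexHull ℝ _ (Finset.mem_coe.2 hy))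
      nlinarith)).1 hsum0
    exact this y hy
  have hwS : ∀ y ∈ V, y ∉ S → wt y = 0 := by
    intro y hy hyS
    have hfy : f y ≠ f b := by
      intro h; exact hyS (Finset.mem_filter.2 ⟨hy, h⟩)
    have := hzero y hy
    rcases mul_eq_zero.1 this with h | h
    · exact h
    · exact absurd (by linarith : f y = f b) hfy
  have hbsumS : ∑ y ∈ S, wt y • y = b := by
    rw [← hbsum]
    exact Finset.sum_subset hSV (fun y hy hyS => by rw [hwS y hy hyS, zero_smul])
  have hwt1S : ∑ y ∈ S, wt y = 1 := by
    rw [← hwt1]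
    exact Finset.sum_subset hSV (fun y hy hyS => hwS y hy hyS)
  have hbconvS : b ∈ convexHull ℝ (S : Set Plane) := by
    rw [Finset.convexHull_eq]
    exact ⟨wt, fun y hy => hwt0 y (hSV hy), hwt1S, by
      rw [Finset.centerMass_eq_of_sum_1 _ id hwt1S]; simpa using hbsumS⟩
  -- S has two distinct elements
  have hSne : S.Nonempty := by
    rcases Finset.eq_empty_or_nonempty S with h | h
    · rw [h] at hbconvS; simp at hbconvS
    · exact h
  have hS2 : 1 < S.card := by
    by_contra h
    push_neg at h
    obtain ⟨s, hs⟩ := Finset.card_le_one_iff_subset_singleton.1 h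
    have : S = {s} := by
      rcases Finset.subset_singleton_iff.1 hs with h' | h'
      · exact absurd h' hSne.ne_empty
      · exact h'
    rw [this] at hbconvS
    simp only [Finset.coe_singleton, convexHull_singleton, Set.mem_singleton_iff] at hbconvS
    apply hbV
    apply hSV
    rw [this, hbconvS]
    exact Finset.mem_singleton_self s
  obtain ⟨s0, hs0, s1, hs1, hs01⟩ := Finset.one_lt_card.1 hS2
  set d : Plane := s1 - s0 with hd
  have hdne : d ≠ 0 := sub_ne_zero.2 (Ne.symm hs01)
  have hfd : f d = 0 := by
    rw [hd, map_sub, hSval s0 hs0, hSval s1 hs1]; ring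
  -- parametrize points with f-value f b
  have hpar : ∀ x : Plane, f x = f b → ∃ t : ℝ, x = s0 + t • d := by
    intro x hx
    have : f (x - s0) = 0 := by rw [map_sub, hx, hSval s0 hs0]; ring
    obtain ⟨t, ht⟩ := ker_lemma hf0 hdne hfd this
    exact ⟨t, by rw [← ht]; abel⟩
  -- inner product functional along the line
  set m : Plane → ℝ := fun x => (inner ℝ d x : ℝ) with hm
  have hmlin : IsLinearMap ℝ m := ⟨fun x y => inner_add_right d x y, fun c x => by
    simp only [hm]; rw [real_inner_smul_right, smul_eq_mul]⟩
  have hdd : (0:ℝ) < inner ℝ d d := by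
    rw [real_inner_self_eq_norm_sq]
    have : 0 < ‖d‖ := norm_pos_iff.2 hdne
    positivity
  have hmval : ∀ (t : ℝ), m (s0 + t • d) = m s0 + t * (inner ℝ d d : ℝ) := by
    intro t
    simp only [hm]
    rw [inner_add_right, real_inner_smul_right]
  obtain ⟨u, huS, hu⟩ := S.exists_min_image m hSne
  obtain ⟨w, hwS', hw⟩ := S.exists_max_image m hSne
  -- parameters
  obtain ⟨tb, htb⟩ := hpar b rfl
  obtain ⟨tu, htu⟩ := hpar u (hSval u huS)
  obtain ⟨tw, htw⟩ := hpar w (hSval w hwS')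
  -- m b between m u and m w
  have hmub : m u ≤ m b := by
    have : convexHull ℝ (S : Set Plane) ⊆ {x | m u ≤ m x} := by
      apply convexHull_min
      · intro y hy; exact hu y (Finset.mem_coe.1 hy)
      · exact convex_halfSpace_ge hmlin (m u)
    exact this hbconvS
  have hmbw : m b ≤ m w := by
    have : convexHull ℝ (S : Set Plane) ⊆ {x | m x ≤ m w} := by
      apply convexHull_min
      · intro y hy; exact hw y (Finset.mem_coe.1 hy)
      · exact convex_halfSpace_le hmlin (m w)
    exact this hbconvS
  rw [htu, htb] at hmub
  rw [htb, htw] at hmbw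
  rw [hmval, hmval] at hmub hmbw
  have htub : tu ≤ tb := by nlinarith
  have htbw : tb ≤ tw := by nlinarith
  have hbu : b ≠ u := fun h => hbV (hSV (h ▸ huS))
  have hbw : b ≠ w := fun h => hbV (hSV (h ▸ hwS'))
  have htub' : tu < tb := lt_of_le_of_ne htub (fun h => hbu (by rw [htb, htu, h]))
  have htbw' : tb < tw := lt_of_le_of_ne htbw (fun h => hbw (by rw [htb, htw, h]))
  refine ⟨u, w, f, hSV huS, hSV hwS', ?_, hSval u huS, hSval w hwS', hfle, hf0, ?_⟩
  · intro h
    rw [htu, htw] at h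
    have : tu = tw := by
      have := add_right_injective s0 h
      exact smul_left_injective ℝ hdne this
    linarith
  · rw [htu, htw, htb]
    exact seg_param htub' htbw'

/-- if a point lies on the supporting line of an open segment containing `b`,
then `b` is in an open segment from that point to one of the endpoints -/
lemma line_block {u w b g : Plane} {f : Plane →L[ℝ] ℝ} (hf0 : f ≠ 0) (huw : u ≠ w)
    (hfu : f u = f b) (hfw : f w = f b) (hseg : b ∈ openSegment ℝ u w)
    (hfg : f g = f b) (hgb : g ≠ b) :
    b ∈ openSegment ℝ g u ∨ b ∈ openSegment ℝ g w := by
  set d : Plane := w - u with hd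
  have hdne : d ≠ 0 := sub_ne_zero.2 (Ne.symm huw)
  have hfd : f d = 0 := by rw [hd, map_sub, hfu, hfw]; ring
  obtain ⟨a1, a2, ha1, ha2, hsum, heq⟩ := hseg
  have hbe : b = u + a2 • d := by
    rw [← heq, hd]
    have : a1 = 1 - a2 := by linarith
    rw [this]
    module
  have ha2' : a2 < 1 := by linarith
  have hfgu : f (g - u) = 0 := by rw [map_sub, hfg, hfu]; ring
  obtain ⟨tau, htau⟩ := ker_lemma hf0 hdne hfd hfgu
  have hge : g = u + tau • d := by rw [← htau]; abel
  have htne : tau ≠ a2 := by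
    intro h
    apply hgb
    rw [hge, hbe, h]
  rcases lt_or_gt_of_ne htne with h | h
  · -- tau < a2 < 1 : b between g and w
    right
    have hmem := seg_param (a := u) (d := d) h ha2'
    rw [← hbe, ← hge] at hmem
    have hwe : u + (1:ℝ) • d = w := by rw [hd]; module
    rw [hwe] at hmem
    exact hmem
  · -- 0 < a2 < tau : b between u and g, use symmetry
    left
    rw [openSegment_symm]
    have hmem := seg_param (a := u) (d := d) (s := 0) ha2 h
    simp only [zero_smul, add_zero] at hmem
    rw [← hbe, ← hge] at hmem
    exact hmem


/-- If k > n then no guard set of exactly k guards k-covers the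
convex n-gon P. -/
theorem statement1 (n k : ℕ) (V : Finset Plane) (P : Set Plane)
    (hP : IsConvexPolygon n V P) (hk : k > n) :
    ∀ G : Finset Plane, ↑G ⊆ P → G.card = k → ¬ KCovers G P k := by
  classical
  obtain ⟨hn3, hVcard, hPeq, hVext⟩ := hP
  intro G hGP hGcard hcover
  have hVP : (V : Set Plane) ⊆ P := by rw [hPeq]; exact subset_convexHull ℝ _
  have hconv : Convex ℝ P := by rw [hPeq]; exact convex_convexHull ℝ _
  -- every point is visible from every guard
  have hnohidden : ∀ p ∈ P, ∀ g ∈ G, ¬ Hidden G g p := by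
    intro p hp g hg
    have hsub : {g ∈ (G : Set Plane) | ¬ Hidden G g p} ⊆ (G : Set Plane) := fun x hx => hx.1
    have hcard := hcover p hp
    have hGn : (G : Set Plane).ncard = k := by rw [Set.ncard_coe_finset]; exact hGcard
    have heq : {g ∈ (G : Set Plane) | ¬ Hidden G g p} = (G : Set Plane) :=
      Set.eq_of_subset_of_ncard_le hsub (by rw [hGn]; exact hcard) G.finite_toSet
    have hgmem : g ∈ {g ∈ (G : Set Plane) | ¬ Hidden G g p} := by
      rw [heq]; exact Finset.mem_coe.2 hg
    exact hgmem.2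
  -- no guard lies strictly between another guard and a point of P
  have hC : ∀ g ∈ G, ∀ b ∈ G, b ≠ g → ∀ p ∈ P, b ∉ openSegment ℝ g p := by
    intro g hg b hb hbg p hp hmem
    exact hnohidden p hp g hg ⟨b, hb, hbg, hmem⟩
  have hk2 : 2 ≤ k := by omega
  have hG2 : ∀ b ∈ G, ∃ g ∈ G, g ≠ b := by
    intro b hb
    by_contra h
    push_neg at h
    have hsub : G ⊆ {b} := fun g hg => Finset.mem_singleton.2 (h g hg)
    have := Finset.card_le_card hsub
    rw [Finset.card_singleton, hGcard] at this
    omega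
  -- the polygon has nonempty interior
  have hspan : affineSpan ℝ (V : Set Plane) = ⊤ := by
    by_contra hne
    have hVne : (V : Set Plane).Nonempty := by
      rw [Finset.coe_nonempty, ← Finset.card_pos]; omega
    have hvs : vectorSpan ℝ (V : Set Plane) ≠ ⊤ := by
      intro h
      exact hne ((AffineSubspace.affineSpan_eq_top_iff_vectorSpan_eq_top_of_nonempty ℝ Plane Plane hVne).2 h)
    have hfr : Module.finrank ℝ (vectorSpan ℝ (V : Set Plane)) < 2 := by
      have h2 := Submodule.finrank_lt (K := ℝ) (V := Plane) hvs
      rw [finrank_plane] at h2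
      exact h2
    have hcoll : Collinear ℝ (V : Set Plane) := by
      rw [collinear_iff_finrank_le_one]
      omega
    obtain ⟨T, hTsub, hT3⟩ := Finset.exists_subset_card_eq (s := V) (n := 3) (by omega)
    obtain ⟨a, b, c, hab, hac, hbc, hTeq⟩ := Finset.card_eq_three.1 hT3
    have haV : a ∈ V := hTsub (by rw [hTeq]; simp)
    have hbV : b ∈ V := hTsub (by rw [hTeq]; simp)
    have hcV : c ∈ V := hTsub (by rw [hTeq]; simp)
    have hcoll3 : Collinear ℝ ({a, b, c} : Set Plane) := hcoll.subset (by
      intro x hx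
      rcases hx with h | h | h <;> simp_all)
    obtain ⟨p0, dir, hrep⟩ := (collinear_iff_exists_forall_eq_smul_vadd _).1 hcoll3
    obtain ⟨ta, hta⟩ := hrep a (by simp)
    obtain ⟨tb, htb⟩ := hrep b (by simp)
    obtain ⟨tc, htc⟩ := hrep c (by simp)
    have htab : tb - ta ≠ 0 := by
      intro h
      apply hab
      rw [hta, htb, show tb = ta by linarith [sub_eq_zero.1 h]]
    have hlam : c - a = ((tc - ta)/(tb - ta)) • (b - a) := by
      rw [hta, htb, htc]
      simp only [vadd_eq_add]
      match_scalars <;> (try field_simp) <;> ring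
    exact par_case (hVext a haV) (hVext b hbV) (hVext c hcV) (Ne.symm hab)
      (Ne.symm hac) hbc hlam
  have hint : (interior P).Nonempty := by
    rw [hPeq, Convex.interior_nonempty_iff_affineSpan_eq_top (convex_convexHull ℝ _),
      affineSpan_convexHull]
    exact hspan
  -- guards are not interior points
  have hnotint : ∀ b ∈ G, b ∉ interior P := by
    intro b hb hbint
    obtain ⟨g, hg, hgb⟩ := hG2 b hb
    obtain ⟨ε, hε, hball⟩ := Metric.isOpen_iff.1 isOpen_interior b hbint
    set d : Plane := b - g with hd
    have hd0 : d ≠ 0 := sub_ne_zero.2 (Ne.symm hgb)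
    have hnd : 0 < ‖d‖ := norm_pos_iff.2 hd0
    set t : ℝ := ε / (2 * ‖d‖) with ht
    have htpos : 0 < t := by positivity
    have hpmem : b + t • d ∈ interior P := by
      apply hball
      rw [Metric.mem_ball, dist_eq_norm]
      have : b + t • d - b = t • d := by abel
      rw [this, norm_smul, Real.norm_eq_abs, abs_of_pos htpos, ht]
      rw [div_mul_eq_mul_div, mul_comm]
      rw [show ‖d‖ * ε / (2 * ‖d‖) = ε / 2 * (‖d‖ / ‖d‖) by ring]
      rw [div_self (ne_of_gt hnd)]
      linarith
    apply hC g hg b hb (Ne.symm hgb) (b + t • d) (interior_subset hpmem)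
    have hge : g = b + (-1 : ℝ) • d := by rw [hd]; module
    have hmem := seg_param (a := b) (d := d) (s := -1) (r := 0) (by norm_num) htpos
    simp only [zero_smul, add_zero] at hmem
    rw [← hge] at hmem
    exact hmem
  -- split the guards
  set A : Finset Plane := G.filter (fun g => g ∈ V) with hA
  set Wg : Finset Plane := G.filter (fun g => g ∉ V) with hWg
  have hdata : ∀ b ∈ Wg, ∃ (u w : Plane) (f : Plane →L[ℝ] ℝ), u ∈ V ∧ w ∈ V ∧ u ≠ w ∧
      f u = f b ∧ f w = f b ∧ (∀ x ∈ P, f x ≤ f b) ∧ f ≠ 0 ∧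
      b ∈ openSegment ℝ u w := by
    intro b hb
    have hbG : b ∈ G := (Finset.mem_filter.1 hb).1
    have hbV : b ∉ V := (Finset.mem_filter.1 hb).2
    exact witness hPeq hconv hint (hGP (Finset.mem_coe.2 hbG)) (hnotint b hbG) hbV
  choose! u w f hu hw huw hfu hfw hfle hf0 hseg using hdata
  have hWgG : ∀ b ∈ Wg, b ∈ G := fun b hb => (Finset.mem_filter.1 hb).1
  have hWgV : ∀ b ∈ Wg, b ∉ V := fun b hb => (Finset.mem_filter.1 hb).2
  -- no other guard on the supporting line
  have hL : ∀ b ∈ Wg, ∀ g ∈ G, g ≠ b → f b g ≠ f b b := by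
    intro b hbW g hg hgb hfg
    rcases line_block (hf0 b hbW) (huw b hbW) (hfu b hbW) (hfw b hbW) (hseg b hbW)
        hfg hgb with h | h
    · exact hC g hg b (hWgG b hbW) (Ne.symm hgb) (u b) (hVP (Finset.mem_coe.2 (hu b hbW))) h
    · exact hC g hg b (hWgG b hbW) (Ne.symm hgb) (w b) (hVP (Finset.mem_coe.2 (hw b hbW))) h
  set pair : Plane → Finset Plane := fun b => {u b, w b} with hpairdef
  have hmem_pair : ∀ b x, x ∈ pair b ↔ (x = u b ∨ x = w b) := by
    intro b x; simp [hpairdef]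
  have hpair_card : ∀ b ∈ Wg, (pair b).card = 2 := by
    intro b hb; exact Finset.card_pair (huw b hb)
  have hfpair : ∀ b ∈ Wg, ∀ x ∈ pair b, f b x = f b b := by
    intro b hb x hx
    rcases (hmem_pair b x).1 hx with h | h
    · rw [h]; exact hfu b hb
    · rw [h]; exact hfw b hb
  have hpairV : ∀ b ∈ Wg, ∀ x ∈ pair b, x ∈ V := by
    intro b hb x hx
    rcases (hmem_pair b x).1 hx with h | h
    · rw [h]; exact hu b hb
    · rw [h]; exact hw b hb
  have hpair_notG : ∀ b ∈ Wg, ∀ x ∈ pair b, x ∉ G := by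
    intro b hb x hx hxG
    have hxb : x ≠ b := by
      intro h
      exact hWgV b hb (h ▸ hpairV b hb x hx)
    exact hL b hb x hxG hxb (hfpair b hb x hx)
  set U : Finset Plane := V.filter (fun v => v ∉ G) with hU
  have hpairU : ∀ b ∈ Wg, pair b ⊆ U := by
    intro b hb x hx
    exact Finset.mem_filter.2 ⟨hpairV b hb x hx, hpair_notG b hb x hx⟩
  -- injectivity of pairs
  have hinj : ∀ b ∈ Wg, ∀ b' ∈ Wg, pair b = pair b' → b = b' := by
    intro b hb b' hb' hpe
    by_contra hne
    have hub' : u b' ∈ pair b := by rw [hpe]; rw [hmem_pair]; left; rfl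
    have hwb' : w b' ∈ pair b := by rw [hpe]; rw [hmem_pair]; right; rfl
    have hfb' : f b b' = f b b :=
      fseg (hfpair b hb _ hub') (hfpair b hb _ hwb') (hseg b' hb')
    exact hL b hb b' (hWgG b' hb') (fun h => hne h.symm) hfb'
  -- each vertex is in at most two pairs
  have hdeg : ∀ v : Plane, (Wg.filter (fun b => v ∈ pair b)).card ≤ 2 := by
    intro v
    by_contra hgt
    push_neg at hgt
    obtain ⟨T, hTsub, hT3⟩ := Finset.exists_subset_card_eq (n := 3) hgt
    obtain ⟨b1, b2, b3, h12, h13, h23, hTeq⟩ := Finset.card_eq_three.1 hT3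
    have hm : ∀ x ∈ T, x ∈ Wg ∧ v ∈ pair x := fun x hx => Finset.mem_filter.1 (hTsub hx)
    have hm1 := hm b1 (by rw [hTeq]; simp)
    have hm2 := hm b2 (by rw [hTeq]; simp)
    have hm3 := hm b3 (by rw [hTeq]; simp)
    have hvV : v ∈ V := hpairV b1 hm1.1 v hm1.2
    set o : Plane → Plane := fun b => if v = u b then w b else u b with ho
    have hov : ∀ b, b ∈ Wg → v ∈ pair b →
        (o b ∈ V ∧ o b ≠ v ∧ f b v = f b b ∧ f b (o b) = f b b ∧ pair b = {v, o b}) := by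
      intro b hb hv
      by_cases hvu : v = u b
      · have hob : o b = w b := by rw [ho]; simp [hvu]
        refine ⟨hob ▸ hw b hb, ?_, ?_, ?_, ?_⟩
        · rw [hob]; intro h; exact huw b hb (by rw [← hvu, ← h])
        · rw [hvu]; exact hfu b hb
        · rw [hob]; exact hfw b hb
        · rw [hob, hpairdef]; simp only []; rw [← hvu]
      · have hvw : v = w b := by
          rcases (hmem_pair b v).1 hv with h | h
          · exact absurd h hvu
          · exact h
        have hob : o b = u b := by rw [ho]; simp [hvu]
        refine ⟨hob ▸ hu b hb, ?_, ?_, ?_, ?_⟩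
        · rw [hob]; intro h; exact hvu h.symm
        · rw [hvw]; exact hfw b hb
        · rw [hob]; exact hfu b hb
        · rw [hob, hpairdef]; simp only []; rw [hvw, Finset.pair_comm]
    have hodist : ∀ bi bj : Plane, bi ∈ Wg → v ∈ pair bi → bj ∈ Wg → v ∈ pair bj →
        bi ≠ bj → o bi ≠ o bj := by
      intro bi bj hbi hvi hbj hvj hne h
      apply hne
      apply hinj bi hbi bj hbj
      rw [(hov bi hbi hvi).2.2.2.2, (hov bj hbj hvj).2.2.2.2, h]
    have hkey : ∀ b b' : Plane, b ∈ Wg → v ∈ pair b → b' ∈ Wg → v ∈ pair b' →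
        o b ≠ o b' → f b (o b' - v) < 0 := by
      intro b b' hb hvb hb' hvb' hoo
      obtain ⟨hoV, hov', hfv, hfo, hpe⟩ := hov b hb hvb
      obtain ⟨hoV2, hov2, hfv2, hfo2, hpe2⟩ := hov b' hb' hvb'
      have hle : f b (o b') ≤ f b b := hfle b hb _ (hVP (Finset.mem_coe.2 hoV2))
      have hle' : f b (o b' - v) ≤ 0 := by rw [map_sub, hfv]; linarith
      rcases lt_or_eq_of_le hle' with h | h
      · exact h
      · exfalso
        have hfd : f b (o b - v) = 0 := by rw [map_sub, hfo, hfv]; ring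
        have hdne : o b - v ≠ 0 := sub_ne_zero.2 hov'
        obtain ⟨lam, hlam⟩ := ker_lemma (hf0 b hb) hdne hfd h
        exact par_case (hVext v hvV) (hVext _ hoV) (hVext _ hoV2) hov' hov2
          hoo hlam
    have ho12 := hodist b1 b2 hm1.1 hm1.2 hm2.1 hm2.2 h12
    have ho13 := hodist b1 b3 hm1.1 hm1.2 hm3.1 hm3.2 h13
    have ho23 := hodist b2 b3 hm2.1 hm2.2 hm3.1 hm3.2 h23
    have hd1 : f b1 (o b1 - v) = 0 := by
      rw [map_sub, (hov b1 hm1.1 hm1.2).2.2.2.1, (hov b1 hm1.1 hm1.2).2.2.1]; ring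
    have hd2 : f b2 (o b2 - v) = 0 := by
      rw [map_sub, (hov b2 hm2.1 hm2.2).2.2.2.1, (hov b2 hm2.1 hm2.2).2.2.1]; ring
    have hd3 : f b3 (o b3 - v) = 0 := by
      rw [map_sub, (hov b3 hm3.1 hm3.2).2.2.2.1, (hov b3 hm3.1 hm3.2).2.2.1]; ring
    exact three_dirs hd1 hd2 hd3
      (hkey b1 b2 hm1.1 hm1.2 hm2.1 hm2.2 ho12)
      (hkey b1 b3 hm1.1 hm1.2 hm3.1 hm3.2 ho13)
      (hkey b2 b1 hm2.1 hm2.2 hm1.1 hm1.2 ho12.symm)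
      (hkey b2 b3 hm2.1 hm2.2 hm3.1 hm3.2 ho23)
      (hkey b3 b1 hm3.1 hm3.2 hm1.1 hm1.2 ho13.symm)
      (hkey b3 b2 hm3.1 hm3.2 hm2.1 hm2.2 ho23.symm)
  -- double counting
  have hcount : 2 * Wg.card ≤ 2 * U.card := by
    have h1 : ∑ b ∈ Wg, (pair b).card = 2 * Wg.card := by
      rw [Finset.sum_congr rfl (fun b hb => hpair_card b hb)]
      simp [mul_comm]
    have h2 : ∀ b ∈ Wg, (pair b).card = ∑ v ∈ U, if v ∈ pair b then 1 else 0 := by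
      intro b hb
      have hfe : U.filter (fun v => v ∈ pair b) = pair b := by
        apply Finset.Subset.antisymm
        · intro x hx; exact (Finset.mem_filter.1 hx).2
        · intro x hx; exact Finset.mem_filter.2 ⟨hpairU b hb hx, hx⟩
      rw [← Finset.card_filter, hfe]
    calc 2 * Wg.card = ∑ b ∈ Wg, (pair b).card := h1.symm
      _ = ∑ b ∈ Wg, ∑ v ∈ U, if v ∈ pair b then 1 else 0 := Finset.sum_congr rfl h2
      _ = ∑ v ∈ U, ∑ b ∈ Wg, if v ∈ pair b then 1 else 0 := Finset.sum_comm
      _ = ∑ v ∈ U, (Wg.filter (fun b => v ∈ pair b)).card := by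
          apply Finset.sum_congr rfl
          intro v hv
          rw [Finset.card_filter]
      _ ≤ ∑ _v ∈ U, 2 := Finset.sum_le_sum (fun v _ => hdeg v)
      _ = 2 * U.card := by simp [mul_comm]
  have hWU : Wg.card ≤ U.card := by omega
  have hsplit : A.card + Wg.card = k := by
    rw [← hGcard, hA, hWg]
    exact Finset.card_filter_add_card_filter_not (p := fun g => g ∈ V)
  have hdisj : Disjoint A U := by
    rw [Finset.disjoint_left]
    intro a ha haU
    exact (Finset.mem_filter.1 haU).2 (Finset.mem_filter.1 ha).1
  have hunion : A ∪ U = V := by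
    apply Finset.Subset.antisymm
    · intro x hx
      rcases Finset.mem_union.1 hx with h | h
      · exact (Finset.mem_filter.1 h).2
      · exact (Finset.mem_filter.1 h).1
    · intro x hx
      by_cases hxG : x ∈ G
      · exact Finset.mem_union.2 (Or.inl (Finset.mem_filter.2 ⟨hxG, hx⟩))
      · exact Finset.mem_union.2 (Or.inr (Finset.mem_filter.2 ⟨hx, hxG⟩))
  have hAU : A.card + U.card = n := by
    rw [← hVcard, ← hunion, Finset.card_union_of_disjoint hdisj]
  omega
end
end

section
/- Let P be a convex n-gon in ℝ² and let k ≥ 1 be a natural number. Then there exists a guard set G ⊆ P with exactly k + 2 guards that k-covers P. -/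
open Set

noncomputable section

local instance : DecidableEq Plane := Classical.decEq _

open MeasureTheory in
section


def LinesOf (G : Finset Plane) : Set (Set Plane) :=
  {L | ∃ a ∈ G, ∃ b ∈ G, a ≠ b ∧ L = (affineSpan ℝ ({a, b} : Set Plane) : Set Plane)}

def Good (G : Finset Plane) : Prop :=
  (∀ a ∈ G, ∀ b ∈ G, ∀ c ∈ G, Collinear ℝ ({a, b, c} : Set Plane) → a = b ∨ a = c ∨ b = c) ∧
  (∀ p : Plane, p ∉ G → {L ∈ LinesOf G | p ∈ L}.ncard ≤ 2)

lemma collinear_line (a b : Plane) :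
    Collinear ℝ ((affineSpan ℝ ({a, b} : Set Plane) : Set Plane)) := by
  have h : Collinear ℝ ({a, b} : Set Plane) := collinear_pair ℝ a b
  rw [Collinear] at h ⊢
  rwa [← AffineSubspace.direction_eq_vectorSpan, direction_affineSpan]

lemma mem_line_left (a b : Plane) : a ∈ (affineSpan ℝ ({a, b} : Set Plane) : Set Plane) :=
  subset_affineSpan ℝ _ (by simp)

lemma mem_line_right (a b : Plane) : b ∈ (affineSpan ℝ ({a, b} : Set Plane) : Set Plane) :=
  subset_affineSpan ℝ _ (by simp)

/-- a line through two given distinct points is unique -/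
lemma line_unique {a b c d : Plane} (hab : a ≠ b)
    (ha : a ∈ (affineSpan ℝ ({c, d} : Set Plane) : Set Plane))
    (hb : b ∈ (affineSpan ℝ ({c, d} : Set Plane) : Set Plane)) :
    (affineSpan ℝ ({c, d} : Set Plane) : Set Plane) =
      (affineSpan ℝ ({a, b} : Set Plane) : Set Plane) := by
  apply Set.Subset.antisymm
  · intro x hx
    exact (collinear_line c d).mem_affineSpan_of_mem_of_ne ha hb hx hab
  · have : ({a, b} : Set Plane) ⊆ (affineSpan ℝ ({c, d} : Set Plane) : Set Plane) := by
      rintro x (rfl | rfl); exact ha; simpa using hb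
    exact (affineSpan_le.2 this : _)

lemma linesOf_finite (G : Finset Plane) : (LinesOf G).Finite := by
  have : LinesOf G ⊆ (fun p : Plane × Plane =>
      (affineSpan ℝ ({p.1, p.2} : Set Plane) : Set Plane)) '' (↑G ×ˢ ↑G) := by
    rintro L ⟨a, ha, b, hb, hab, rfl⟩
    exact ⟨(a, b), by simp [ha, hb], rfl⟩
  exact ((G.finite_toSet.prod G.finite_toSet).image _).subset this


lemma combo_mem_line (x y : Plane) (r : ℝ) :
    (1 - r) • x + r • y ∈ (affineSpan ℝ ({x, y} : Set Plane) : Set Plane) := by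
  have := AffineMap.lineMap_mem_affineSpan_pair r x y
  rwa [AffineMap.lineMap_apply_module] at this

lemma not_mutual {g b p : Plane} (hb : b ∈ openSegment ℝ g p)
    (hg : g ∈ openSegment ℝ b p) (hne : b ≠ g) : False := by
  rw [openSegment_eq_image] at hb hg
  obtain ⟨t, ht, hbt⟩ := hb
  obtain ⟨s, hs, hgs⟩ := hg
  simp only [Set.mem_Ioo] at ht hs
  simp only at hbt hgs
  have e1 : b - p = (1 - t) • (g - p) := by
    rw [← hbt]; module
  have e2 : g - p = (1 - s) • (b - p) := by
    rw [← hgs]; module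
  rw [e2, smul_smul] at e1
  have e3 : (1 - (1 - t) * (1 - s)) • (b - p) = 0 := by
    rw [sub_smul, one_smul]; nth_rewrite 1 [e1]; rw [sub_self]
  have hc : (1 - (1 - t) * (1 - s)) ≠ 0 := by nlinarith [ht.1, ht.2, hs.1, hs.2]
  have hbp : b - p = 0 := by
    have := smul_eq_zero.1 e3; tauto
  have hbp' : b = p := by rwa [sub_eq_zero] at hbp
  have hgp : g = p := by rw [hbp] at e2; simp at e2; rwa [sub_eq_zero] at e2
  exact hne (hbp'.trans hgp.symm)

lemma mem_line_of_openSegment {g b p : Plane} (hb : b ∈ openSegment ℝ g p) :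
    p ∈ (affineSpan ℝ ({g, b} : Set Plane) : Set Plane) := by
  rw [openSegment_eq_image] at hb
  obtain ⟨t, ht, hbt⟩ := hb
  simp only [Set.mem_Ioo] at ht
  simp only at hbt
  have hp : p = (1 - 1/t) • g + (1/t) • b := by
    rw [← hbt]; match_scalars <;> field_simp [ht.1.ne'] <;> ring
  rw [hp]; exact combo_mem_line g b (1/t)

lemma collinear_of_openSegment {g b p : Plane} (hb : b ∈ openSegment ℝ g p) :
    Collinear ℝ ({g, b, p} : Set Plane) := by
  rw [openSegment_eq_image] at hb
  obtain ⟨t, _, hbt⟩ := hb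
  simp only at hbt
  have hmem : b ∈ (affineSpan ℝ ({g, p} : Set Plane) : Set Plane) := by
    rw [← hbt]; exact combo_mem_line g p t
  have h := collinear_insert_of_mem_affineSpan_pair hmem
  refine h.subset ?_
  intro x hx; simp at hx ⊢; tauto


lemma hidden_ne {G : Finset Plane} {g p : Plane} (h : Hidden G g p) : g ≠ p := by
  rintro rfl
  obtain ⟨b, _, hbg, hseg⟩ := h
  rw [openSegment_same] at hseg
  exact hbg hseg

lemma blocked_le_two {G : Finset Plane} (hG : Good G) (p : Plane) :
    {g ∈ (G : Set Plane) | Hidden G g p}.ncard ≤ 2 := by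
  by_cases hp : p ∈ G
  · -- no guard is hidden from p when p is itself a guard
    have : {g ∈ (G : Set Plane) | Hidden G g p} = ∅ := by
      ext g
      simp only [Set.mem_setOf_eq, Set.mem_empty_iff_false, iff_false, not_and]
      intro hgG hH
      obtain ⟨b, hbG, hbg, hseg⟩ := hH
      have hgp : g ≠ p := hidden_ne ⟨b, hbG, hbg, hseg⟩
      have hbp : b ≠ p := by
        rintro rfl
        rw [openSegment_eq_image] at hseg
        obtain ⟨t, ht, hbt⟩ := hseg
        simp only [Set.mem_Ioo] at ht
        simp only at hbt
        have : (1 - t) • g = (1 - t) • b := by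
          have : (1 - t) • g + t • b = (1 - t) • b + t • b := by
            rw [hbt]; rw [← add_smul]; rw [sub_add_cancel, one_smul]
          exact add_right_cancel this
        have := smul_right_injective _ (by linarith [ht.2] : (1:ℝ) - t ≠ 0) this
        exact hgp (this.trans rfl)
      have hcol := collinear_of_openSegment hseg
      -- reorder to {g, b, p}
      rcases hG.1 g hgG b hbG p hp hcol with h | h | h
      · exact hbg h.symm
      · exact hgp h
      · exact hbp h
    rw [this]; simp
  · -- p not a guard: inject blocked guards into lines through p
    set B := {g ∈ (G : Set Plane) | Hidden G g p} with hB
    have hBsub : B ⊆ (G : Set Plane) := fun g hg => hg.1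
    have hBfin : B.Finite := G.finite_toSet.subset hBsub
    have hchoice : ∀ g ∈ B, ∃ b, b ∈ G ∧ b ≠ g ∧ b ∈ openSegment ℝ g p := by
      rintro g ⟨-, b, hbG, hbg, hseg⟩; exact ⟨b, hbG, hbg, hseg⟩
    choose! bl hbl1 hbl2 hbl3 using hchoice
    have hmapsto : ∀ g ∈ B, (affineSpan ℝ ({g, bl g} : Set Plane) : Set Plane) ∈
        {L ∈ LinesOf G | p ∈ L} := by
      intro g hg
      refine ⟨⟨g, hg.1, bl g, hbl1 g hg, (hbl2 g hg).symm, rfl⟩, ?_⟩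
      exact mem_line_of_openSegment (hbl3 g hg)
    have hinj : Set.InjOn (fun g => (affineSpan ℝ ({g, bl g} : Set Plane) : Set Plane)) B := by
      intro g1 hg1 g2 hg2 heq
      by_contra hne
      simp only at heq
      -- all four points lie on the common line
      have h1g : g1 ∈ (affineSpan ℝ ({g1, bl g1} : Set Plane) : Set Plane) := mem_line_left _ _
      have h1b : bl g1 ∈ (affineSpan ℝ ({g1, bl g1} : Set Plane) : Set Plane) := mem_line_right _ _
      have h2g : g2 ∈ (affineSpan ℝ ({g1, bl g1} : Set Plane) : Set Plane) := by
        rw [heq]; exact mem_line_left _ _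
      have h2b : bl g2 ∈ (affineSpan ℝ ({g1, bl g1} : Set Plane) : Set Plane) := by
        rw [heq]; exact mem_line_right _ _
      have hcolL := collinear_line g1 (bl g1)
      -- bl g1 = g2
      have hb1 : bl g1 = g2 := by
        by_contra hb1
        have hcol : Collinear ℝ ({g1, g2, bl g1} : Set Plane) := by
          refine hcolL.subset ?_
          rintro x (rfl | rfl | rfl)
          exacts [h1g, h2g, h1b]
        rcases hG.1 g1 hg1.1 g2 hg2.1 (bl g1) (hbl1 g1 hg1) hcol with h | h | h
        · exact hne h
        · exact (hbl2 g1 hg1) h.symm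
        · exact hb1 h.symm
      have hb2 : bl g2 = g1 := by
        by_contra hb2
        have hcol : Collinear ℝ ({g2, g1, bl g2} : Set Plane) := by
          refine hcolL.subset ?_
          rintro x (rfl | rfl | rfl)
          exacts [h2g, h1g, h2b]
        rcases hG.1 g2 hg2.1 g1 hg1.1 (bl g2) (hbl1 g2 hg2) hcol with h | h | h
        · exact hne h.symm
        · exact (hbl2 g2 hg2) h.symm
        · exact hb2 h.symm
      have hs1 := hbl3 g1 hg1
      have hs2 := hbl3 g2 hg2
      rw [hb1] at hs1
      rw [hb2] at hs2
      exact not_mutual hs1 hs2 (fun h => hne h.symm)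
    have hfin2 : {L ∈ LinesOf G | p ∈ L}.Finite :=
      (linesOf_finite G).subset (fun L hL => hL.1)
    calc B.ncard ≤ {L ∈ LinesOf G | p ∈ L}.ncard :=
          Set.ncard_le_ncard_of_injOn _ hmapsto hinj hfin2
      _ ≤ 2 := hG.2 p hp

lemma good_visible {G : Finset Plane} (hG : Good G) (p : Plane) :
    G.card - 2 ≤ {g ∈ (G : Set Plane) | ¬ Hidden G g p}.ncard := by
  have hsplit : {g ∈ (G : Set Plane) | ¬ Hidden G g p} =
      (G : Set Plane) \ {g ∈ (G : Set Plane) | Hidden G g p} := by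
    ext g; simp only [Set.mem_setOf_eq, Set.mem_diff]; tauto
  have hsub : {g ∈ (G : Set Plane) | Hidden G g p} ⊆ (G : Set Plane) := fun g hg => hg.1
  rw [hsplit, Set.ncard_diff hsub (G.finite_toSet.subset hsub), Set.ncard_coe_finset]
  have := blocked_le_two hG p
  omega


lemma line_ne_top (a b : Plane) : affineSpan ℝ ({a, b} : Set Plane) ≠ ⊤ := by
  intro h
  have hd : (affineSpan ℝ ({a, b} : Set Plane)).direction = ⊤ := by
    rw [h]; exact AffineSubspace.direction_top ℝ _ _
  rw [direction_affineSpan, vectorSpan_pair] at hd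
  have h1 : Module.rank ℝ (Submodule.span ℝ ({a -ᵥ b} : Set Plane)) ≤ 1 := by
    simpa using rank_span_le (R := ℝ) ({a -ᵥ b} : Set Plane)
  rw [show (ℝ ∙ (a -ᵥ b)) = Submodule.span ℝ ({a -ᵥ b} : Set Plane) from rfl] at hd
  rw [hd, rank_top] at h1
  have h2 : Module.rank ℝ Plane = 2 := by
    have hf : Module.finrank ℝ Plane = 2 := finrank_euclideanSpace_fin
    rw [← Module.finrank_eq_rank ℝ Plane, hf]; norm_num
  rw [h2] at h1
  norm_num at h1

lemma line_null (a b : Plane) :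
    volume ((affineSpan ℝ ({a, b} : Set Plane) : Set Plane)) = 0 :=
  Measure.addHaar_affineSubspace volume _ (line_ne_top a b)

lemma singleton_null (a : Plane) : volume ({a} : Set Plane) = 0 := by
  have h : ({a} : Set Plane) ⊆ (affineSpan ℝ ({a, a} : Set Plane) : Set Plane) := by
    intro x hx; rw [hx]
    exact subset_affineSpan ℝ _ (by simp)
  exact measure_mono_null h (line_null a a)


def Concur (G : Finset Plane) : Set Plane :=
  {x | x ∉ G ∧ 2 ≤ {L ∈ LinesOf G | x ∈ L}.ncard}

lemma concur_finite (G : Finset Plane) : (Concur G).Finite := by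
  have hsub : Concur G ⊆ ⋃ L1 ∈ LinesOf G, ⋃ L2 ∈ LinesOf G,
      {x | x ∈ L1 ∧ x ∈ L2 ∧ L1 ≠ L2} := by
    intro x hx
    have hfin : {L ∈ LinesOf G | x ∈ L}.Finite := (linesOf_finite G).subset fun L hL => hL.1
    have h2 : 1 < {L ∈ LinesOf G | x ∈ L}.ncard := hx.2
    rw [Set.one_lt_ncard_iff hfin] at h2
    obtain ⟨L1, L2, h1, h2', hne⟩ := h2
    simp only [Set.mem_iUnion]
    exact ⟨L1, h1.1, L2, h2'.1, h1.2, h2'.2, hne⟩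
  refine Set.Finite.subset ?_ hsub
  refine (linesOf_finite G).biUnion fun L1 hL1 => (linesOf_finite G).biUnion fun L2 hL2 => ?_
  -- each pairwise intersection of distinct lines is a subsingleton
  rcases hL1 with ⟨a, _, b, _, hab, rfl⟩
  apply Set.Subsingleton.finite
  intro x hx y hy
  by_contra hxy
  have e1 := line_unique hxy hx.1 hy.1
  obtain ⟨c, -, d, -, hcd, rfl⟩ := hL2
  have e2 := line_unique hxy hx.2.1 hy.2.1
  exact hx.2.2 (e1.trans e2.symm)

def BadSet (G : Finset Plane) : Set Plane :=
  (⋃ a ∈ (G : Set Plane), {a}) ∪ (⋃ L ∈ LinesOf G, L) ∪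
    (⋃ a ∈ (G : Set Plane), ⋃ x ∈ Concur G, (affineSpan ℝ ({a, x} : Set Plane) : Set Plane))

lemma badSet_null (G : Finset Plane) : volume (BadSet G) = 0 := by
  refine measure_union_null (measure_union_null ?_ ?_) ?_
  · rw [measure_biUnion_null_iff G.countable_toSet]
    exact fun a _ => singleton_null a
  · rw [measure_biUnion_null_iff (linesOf_finite G).countable]
    rintro L ⟨a, -, b, -, -, rfl⟩
    exact line_null a b
  · rw [measure_biUnion_null_iff G.countable_toSet]
    intro a _
    rw [measure_biUnion_null_iff (concur_finite G).countable]
    exact fun x _ => line_null a x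



lemma linesOf_insert {G : Finset Plane} {q : Plane} {L : Set Plane} :
    L ∈ LinesOf (insert q G) ↔ L ∈ LinesOf G ∨
      ∃ a ∈ G, a ≠ q ∧ L = (affineSpan ℝ ({q, a} : Set Plane) : Set Plane) := by
  constructor
  · rintro ⟨a, ha, b, hb, hab, rfl⟩
    rw [Finset.mem_insert] at ha hb
    rcases ha with rfl | ha
    · rcases hb with rfl | hb
      · exact absurd rfl hab
      · exact Or.inr ⟨b, hb, fun h => hab h.symm, rfl⟩
    · rcases hb with rfl | hb
      · refine Or.inr ⟨a, ha, fun h => hab h, ?_⟩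
        rw [Set.pair_comm]
      · exact Or.inl ⟨a, ha, b, hb, hab, rfl⟩
  · rintro (⟨a, ha, b, hb, hab, rfl⟩ | ⟨a, ha, haq, rfl⟩)
    · exact ⟨a, Finset.mem_insert_of_mem ha, b, Finset.mem_insert_of_mem hb, hab, rfl⟩
    · exact ⟨q, Finset.mem_insert_self q G,
        a, Finset.mem_insert_of_mem ha, fun h => haq h.symm, rfl⟩

lemma not_mem_of_not_bad {G : Finset Plane} {q : Plane} (hq : q ∉ BadSet G) : q ∉ G := by
  intro hqG
  exact hq (Or.inl (Or.inl (Set.mem_biUnion hqG rfl)))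

lemma not_mem_line_of_not_bad {G : Finset Plane} {q : Plane} (hq : q ∉ BadSet G)
    {L : Set Plane} (hL : L ∈ LinesOf G) : q ∉ L := by
  intro hqL
  exact hq (Or.inl (Or.inr (Set.mem_biUnion hL hqL)))

lemma not_mem_concline_of_not_bad {G : Finset Plane} {q : Plane} (hq : q ∉ BadSet G)
    {a x : Plane} (ha : a ∈ G) (hx : x ∈ Concur G) :
    q ∉ (affineSpan ℝ ({a, x} : Set Plane) : Set Plane) := by
  intro hqL
  refine hq (Or.inr ?_)
  exact Set.mem_biUnion ha (Set.mem_biUnion hx hqL)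

lemma good_insert {G : Finset Plane} (hG : Good G) {q : Plane} (hq : q ∉ BadSet G) :
    Good (insert q G) := by
  have hqG : q ∉ G := not_mem_of_not_bad hq
  have hqline : ∀ x ∈ G, ∀ y ∈ G, x ≠ y →
      q ∉ (affineSpan ℝ ({x, y} : Set Plane) : Set Plane) :=
    fun x hx y hy hxy => not_mem_line_of_not_bad hq ⟨x, hx, y, hy, hxy, rfl⟩
  constructor
  · -- no three collinear
    intro a ha b hb c hc hcol
    rw [Finset.mem_insert] at ha hb hc
    by_contra hne
    push_neg at hne
    obtain ⟨hab, hac, hbc⟩ := hne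
    have key : ∀ x y : Plane, x ∈ G → y ∈ G → x ≠ y →
        q ∈ ({a, b, c} : Set Plane) → x ∈ ({a, b, c} : Set Plane) →
        y ∈ ({a, b, c} : Set Plane) → False := by
      intro x y hx hy hxy hqm hxm hym
      exact hqline x hx y hy hxy
        (hcol.mem_affineSpan_of_mem_of_ne hxm hym hqm hxy)
    rcases ha with rfl | ha
    · rcases hb with rfl | hb
      · exact hab rfl
      rcases hc with rfl | hc
      · exact hac rfl
      exact key b c hb hc hbc (by simp) (by simp) (by simp)
    · rcases hb with rfl | hb
      · rcases hc with rfl | hc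
        · exact hbc rfl
        exact key a c ha hc hac (by simp) (by simp) (by simp)
      · rcases hc with rfl | hc
        · exact key a b ha hb hab (by simp) (by simp) (by simp)
        · rcases hG.1 a ha b hb c hc hcol with h | h | h
          exacts [hab h, hac h, hbc h]
  · -- concurrency bound
    intro p hp
    rw [Finset.mem_insert] at hp
    push_neg at hp
    obtain ⟨hpq, hpG⟩ := hp
    set A := {L ∈ LinesOf G | p ∈ L} with hA
    set B := {L : Set Plane | (∃ a ∈ G, a ≠ q ∧
        L = (affineSpan ℝ ({q, a} : Set Plane) : Set Plane)) ∧ p ∈ L} with hBdef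
    have hsplit : {L ∈ LinesOf (insert q G) | p ∈ L} ⊆ A ∪ B := by
      rintro L ⟨hL, hpL⟩
      rcases linesOf_insert.1 hL with h | h
      · exact Or.inl ⟨h, hpL⟩
      · exact Or.inr ⟨h, hpL⟩
    have hAfin : A.Finite := (linesOf_finite G).subset fun L hL => hL.1
    have hBsub : B.Subsingleton := by
      rintro L1 ⟨⟨a1, ha1, ha1q, rfl⟩, hp1⟩ L2 ⟨⟨a2, ha2, ha2q, rfl⟩, hp2⟩
      have hq1 : q ∈ (affineSpan ℝ ({q, a1} : Set Plane) : Set Plane) := mem_line_left _ _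
      have hq2 : q ∈ (affineSpan ℝ ({q, a2} : Set Plane) : Set Plane) := mem_line_left _ _
      have e1 := line_unique (Ne.symm hpq : q ≠ p) hq1 hp1
      have e2 := line_unique (Ne.symm hpq : q ≠ p) hq2 hp2
      rw [e1, e2]
    by_cases h2 : 2 ≤ A.ncard
    · -- then p is a crossing point, so no new line can pass through p
      have hpc : p ∈ Concur G := ⟨hpG, h2⟩
      have hBempty : B = ∅ := by
        rw [Set.eq_empty_iff_forall_notMem]
        rintro L ⟨⟨a, ha, haq, rfl⟩, hpL⟩
        have hap : a ≠ p := fun h => hpG (h ▸ ha)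
        have haa : a ∈ (affineSpan ℝ ({q, a} : Set Plane) : Set Plane) := mem_line_right _ _
        have e := line_unique hap haa hpL
        have : q ∈ (affineSpan ℝ ({a, p} : Set Plane) : Set Plane) := by
          rw [← e]; exact mem_line_left _ _
        exact not_mem_concline_of_not_bad hq ha hpc this
      have hsub2 : {L ∈ LinesOf (insert q G) | p ∈ L} ⊆ A := by
        intro L hL
        rcases hsplit hL with h | h
        · exact h
        · rw [hBempty] at h; exact absurd h (Set.notMem_empty L)
      calc {L ∈ LinesOf (insert q G) | p ∈ L}.ncard ≤ A.ncard :=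
            Set.ncard_le_ncard hsub2 hAfin
        _ ≤ 2 := hG.2 p hpG
    · push_neg at h2
      calc {L ∈ LinesOf (insert q G) | p ∈ L}.ncard ≤ (A ∪ B).ncard :=
            Set.ncard_le_ncard hsplit (hAfin.union hBsub.finite)
        _ ≤ A.ncard + B.ncard := Set.ncard_union_le _ _
        _ ≤ 1 + 1 := by
            have hb1 : B.ncard ≤ 1 := by
              rw [Set.ncard_le_one_iff hBsub.finite]
              intro x y hx hy; exact hBsub hx hy
            omega
        _ = 2 := rfl

lemma exists_good (T : Set Plane) (hT : (interior T).Nonempty) (m : ℕ) :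
    ∃ G : Finset Plane, G.card = m ∧ ↑G ⊆ T ∧ Good G := by
  induction m with
  | zero =>
    refine ⟨∅, rfl, by simp, ?_, ?_⟩
    · intro a ha; simp at ha
    · intro p _
      have : {L ∈ LinesOf (∅ : Finset Plane) | p ∈ L} = ∅ := by
        rw [Set.eq_empty_iff_forall_notMem]
        rintro L ⟨⟨a, ha, _⟩, _⟩; simp at ha
      rw [this]; simp
  | succ m ih =>
    obtain ⟨G, hcard, hsub, hgood⟩ := ih
    have hpos : 0 < volume T := Measure.measure_pos_of_nonempty_interior volume hT
    have : (T \ BadSet G).Nonempty := by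
      rw [Set.nonempty_iff_ne_empty]
      intro h
      have hTB : T ⊆ BadSet G := by
        intro x hx
        by_contra hxB
        exact (Set.eq_empty_iff_forall_notMem.1 h x) ⟨hx, hxB⟩
      have : volume T ≤ volume (BadSet G) := measure_mono hTB
      rw [badSet_null G] at this
      exact absurd (le_antisymm this zero_le) (ne_of_gt hpos)
    obtain ⟨q, hqT, hqB⟩ := this
    refine ⟨insert q G, ?_, ?_, good_insert hgood hqB⟩
    · rw [Finset.card_insert_of_notMem (not_mem_of_not_bad hqB), hcard]
    · intro x hx
      rw [Finset.coe_insert, Set.mem_insert_iff] at hx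
      rcases hx with rfl | hx
      exacts [hqT, hsub hx]


lemma exists_indep_triple {n : ℕ} {V : Finset Plane} {P : Set Plane}
    (hP : IsConvexPolygon n V P) :
    ∃ v0 v1 v2, v0 ∈ V ∧ v1 ∈ V ∧ v2 ∈ V ∧
      ¬ Collinear ℝ ({v0, v1, v2} : Set Plane) := by
  obtain ⟨hn, hcard, hhull, hext⟩ := hP
  have h3 : 3 ≤ V.card := hcard ▸ hn
  classical
  obtain ⟨v0, hv0⟩ := Finset.card_pos.1 (show 0 < V.card by omega)
  have h1 : 0 < ((V.erase v0).card) := by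
    rw [Finset.card_erase_of_mem hv0]; omega
  obtain ⟨v1, hv1⟩ := Finset.card_pos.1 h1
  have h2 : 0 < (((V.erase v0).erase v1).card) := by
    rw [Finset.card_erase_of_mem hv1, Finset.card_erase_of_mem hv0]; omega
  obtain ⟨v2, hv2⟩ := Finset.card_pos.1 h2
  have hv1V : v1 ∈ V := Finset.mem_of_mem_erase hv1
  have hv2V : v2 ∈ V := Finset.mem_of_mem_erase (Finset.mem_of_mem_erase hv2)
  have h01 : v1 ≠ v0 := Finset.ne_of_mem_erase hv1
  have h21 : v2 ≠ v1 := Finset.ne_of_mem_erase hv2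
  have h20 : v2 ≠ v0 := Finset.ne_of_mem_erase (Finset.mem_of_mem_erase hv2)
  refine ⟨v0, v1, v2, hv0, hv1V, hv2V, ?_⟩
  intro hcol
  have hVP : (V : Set Plane) ⊆ P := hhull ▸ subset_convexHull ℝ _
  -- one of the three is strictly between the other two
  have hmid : (v1 ∈ openSegment ℝ v0 v2 ∧ v1 ∈ V ∧ v0 ∈ V ∧ v2 ∈ V ∧ v0 ≠ v1 ∧ v2 ≠ v1) ∨
      (v2 ∈ openSegment ℝ v1 v0 ∧ v2 ∈ V ∧ v1 ∈ V ∧ v0 ∈ V ∧ v1 ≠ v2 ∧ v0 ≠ v2) ∨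
      (v0 ∈ openSegment ℝ v2 v1 ∧ v0 ∈ V ∧ v2 ∈ V ∧ v1 ∈ V ∧ v2 ≠ v0 ∧ v1 ≠ v0) := by
    rcases hcol.wbtw_or_wbtw_or_wbtw with h | h | h
    · left
      refine ⟨?_, hv1V, hv0, hv2V, h01.symm, h21⟩
      have hs : Sbtw ℝ v0 v1 v2 := ⟨h, h01, h21.symm⟩
      rw [openSegment_eq_image_lineMap]
      exact (sbtw_iff_mem_image_Ioo_and_ne.1 hs).1
    · right; left
      refine ⟨?_, hv2V, hv1V, hv0, h21.symm, h20.symm⟩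
      have hs : Sbtw ℝ v1 v2 v0 := ⟨h, h21, h20⟩
      rw [openSegment_eq_image_lineMap]
      exact (sbtw_iff_mem_image_Ioo_and_ne.1 hs).1
    · right; right
      refine ⟨?_, hv0, hv2V, hv1V, h20, h01⟩
      have hs : Sbtw ℝ v2 v0 v1 := ⟨h, h20.symm, h01.symm⟩
      rw [openSegment_eq_image_lineMap]
      exact (sbtw_iff_mem_image_Ioo_and_ne.1 hs).1
  rcases hmid with ⟨hseg, hm, ha, hb, hna, hnb⟩ | ⟨hseg, hm, ha, hb, hna, hnb⟩ |
      ⟨hseg, hm, ha, hb, hna, hnb⟩ <;>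
    {
      have hex := hext _ hm
      rw [mem_extremePoints] at hex
      exact hna (hex.2 _ (hVP ha) _ (hVP hb) hseg).1 }


theorem statement4 (n k : ℕ) (V : Finset Plane) (P : Set Plane)
    (hP : IsConvexPolygon n V P) (hk : 1 ≤ k) :
    ∃ G : Finset Plane, ↑G ⊆ P ∧ G.card = k + 2 ∧ KCovers G P k := by
  obtain ⟨v0, v1, v2, hv0, hv1, hv2, hncol⟩ := exists_indep_triple hP
  set T : Set Plane := convexHull ℝ ({v0, v1, v2} : Set Plane) with hT
  have hTP : T ⊆ P := by
    rw [hP.2.2.1]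
    exact convexHull_mono (by
      rintro x (rfl | rfl | rfl)
      exacts [hv0, hv1, hv2])
  have hspan : affineSpan ℝ T = ⊤ := by
    rw [hT, affineSpan_convexHull]
    have hi : AffineIndependent ℝ ![v0, v1, v2] :=
      affineIndependent_iff_not_collinear_set.2 hncol
    have hrange : Set.range ![v0, v1, v2] = ({v0, v1, v2} : Set Plane) := by
      ext x
      simp [Matrix.range_cons, Matrix.range_empty]
      tauto
    rw [← hrange]
    rw [hi.affineSpan_eq_top_iff_card_eq_finrank_add_one]
    simp [finrank_euclideanSpace_fin]
  have hint : (interior T).Nonempty :=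
    ((convex_convexHull ℝ _).interior_nonempty_iff_affineSpan_eq_top).2 hspan
  obtain ⟨G, hcard, hGT, hgood⟩ := exists_good T hint (k + 2)
  refine ⟨G, fun x hx => hTP (hGT hx), hcard, ?_⟩
  intro p _
  have := good_visible hgood p
  rw [hcard] at this
  omega

end
end
end

section
/- Let P be a convex n-gon in ℝ² and let G ⊆ P be a guard set with |G| > n. Then there exist a point x ∈ P and a guard g ∈ G such that x is hidden from g (i.e., some other guard of G lies strictly between g and x). -/
open Set

noncomputable section

namespace Statement5Aux

lemma mem_openSegment_param {v w b : Plane} (θ : ℝ) (h0 : 0 < θ) (h1 : θ < 1)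
    (hb : b = v + θ • (w - v)) : b ∈ openSegment ℝ v w := by
  rw [openSegment_eq_image']
  exact ⟨θ, ⟨h0, h1⟩, hb.symm⟩

lemma openSegment_param {v w b : Plane} (hb : b ∈ openSegment ℝ v w) :
    ∃ θ : ℝ, 0 < θ ∧ θ < 1 ∧ b = v + θ • (w - v) := by
  rw [openSegment_eq_image'] at hb
  obtain ⟨θ, ⟨h0, h1⟩, hb⟩ := hb
  exact ⟨θ, h0, h1, hb.symm⟩

lemma mem_segment_param {v w : Plane} (θ : ℝ) (h0 : 0 ≤ θ) (h1 : θ ≤ 1) :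
    v + θ • (w - v) ∈ segment ℝ v w := by
  rw [segment_eq_image']
  exact ⟨θ, ⟨h0, h1⟩, rfl⟩

/-- No point of `P` lies strictly beyond guard `b` on the ray from guard `g` through `b`. -/
lemma key_ray {P : Set Plane} {G : Finset Plane}
    (hno : ∀ x ∈ P, ∀ g ∈ G, ¬ Hidden G g x)
    {b g : Plane} (hb : b ∈ G) (hg : g ∈ G) (hne : g ≠ b) {t : ℝ} (ht : 0 < t) :
    b + t • (b - g) ∉ P := by
  intro hxP
  refine hno _ hxP g hg ⟨b, hb, Ne.symm hne, ?_⟩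
  have h1t : (0:ℝ) < 1 + t := by linarith
  apply mem_openSegment_param (1/(1+t)) (by positivity) (by rw [div_lt_one h1t]; linarith)
  have h : b + t • (b - g) - g = (1+t) • (b - g) := by module
  rw [h, smul_smul, one_div, inv_mul_cancel₀ (ne_of_gt h1t), one_smul]
  module

/-- The structure attached to a non-vertex guard `b`: two distinct vertices `v w` with `b`
strictly between them, lying on a common supporting line of `P`. -/
def Edgey (P : Set Plane) (V : Finset Plane) (b v w : Plane) : Prop :=
  v ∈ V ∧ w ∈ V ∧ v ≠ w ∧ b ∈ openSegment ℝ v w ∧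
    ∃ f : Plane →L[ℝ] ℝ, f ≠ 0 ∧ (∀ p ∈ P, f p ≤ f b) ∧ f v = f b ∧ f w = f b

lemma Edgey.symm {P V b v w} (h : Edgey P V b v w) : Edgey P V b w v := by
  obtain ⟨hv, hw, hvw, hseg, f, hf0, hfm, hfv, hfw⟩ := h
  exact ⟨hw, hv, hvw.symm, (openSegment_symm ℝ v w) ▸ hseg, f, hf0, hfm, hfw, hfv⟩

lemma Edgey.ne_left {P V b v w} (h : Edgey P V b v w) : b ≠ v := by
  obtain ⟨_, _, hvw, hseg, -⟩ := h
  intro hbv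
  rw [hbv] at hseg
  exact hvw (left_mem_openSegment_iff.1 hseg)

lemma Edgey.ne_right {P V b v w} (h : Edgey P V b v w) : b ≠ w :=
  h.symm.ne_left

/-- If `b` is a guard with edge data `(v,w)`, no other guard lies on the line through `v,w`. -/
lemma no_guard_on_line {V : Finset Plane} {P : Set Plane}
    (hPconv : Convex ℝ P) (hVP : ∀ y ∈ V, y ∈ P)
    {G : Finset Plane} (hno : ∀ x ∈ P, ∀ g ∈ G, ¬ Hidden G g x)
    {b v w : Plane} (hb : b ∈ G) (hE : Edgey P V b v w)
    {b' : Plane} (hb' : b' ∈ G) (hne : b' ≠ b) {s : ℝ} (hcol : b' = v + s • (w - v)) :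
    False := by
  obtain ⟨hv, hw, hvw, hseg, -⟩ := hE
  obtain ⟨θ, hθ0, hθ1, hbeq⟩ := openSegment_param hseg
  have hd0 : θ - s ≠ 0 := by
    intro h
    apply hne
    have : θ = s := by linarith [sub_eq_zero.1 h]
    rw [hcol, hbeq, this]
  set d := θ - s with hd
  have hbb' : b - b' = d • (w - v) := by rw [hbeq, hcol]; module
  set t := min θ (1-θ) / (2 * |d|) with htdef
  have habs : 0 < |d| := abs_pos.2 hd0
  have hmin : 0 < min θ (1-θ) := lt_min hθ0 (by linarith)
  have ht0 : 0 < t := by positivity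
  have hcoef : b + t • (b - b') = v + (θ + t * d) • (w - v) := by
    rw [hbb', hbeq, smul_smul]; module
  have htd : |t * d| = min θ (1-θ) / 2 := by
    rw [abs_mul, abs_of_pos ht0, htdef]
    field_simp
  have h1 : |t * d| ≤ θ / 2 := by
    rw [htd]; have := min_le_left θ (1-θ); linarith
  have h2 : |t * d| ≤ (1-θ) / 2 := by
    rw [htd]; have := min_le_right θ (1-θ); linarith
  have hb1 := neg_abs_le (t * d)
  have hb2 := le_abs_self (t * d)
  have hmem : b + t • (b - b') ∈ P := by
    rw [hcoef]
    refine hPconv.segment_subset (hVP v hv) (hVP w hw) ?_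
    exact mem_segment_param _ (by linarith) (by linarith)
  exact key_ray hno hb hb' hne ht0 hmem

lemma combo3_mem {P : Set Plane} (hP : Convex ℝ P) {v w1 w2 : Plane}
    (hv : v ∈ P) (hw1 : w1 ∈ P) (hw2 : w2 ∈ P) {x y : ℝ}
    (hx : 0 ≤ x) (hy : 0 ≤ y) (hxy : x + y ≤ 1) :
    v + x • (w1 - v) + y • (w2 - v) ∈ P := by
  have h := hP.sum_mem (t := (Finset.univ : Finset (Fin 3)))
    (w := ![1 - x - y, x, y]) (z := ![v, w1, w2])
    (by intro i _; fin_cases i <;> simp <;> linarith)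
    (by simp [Fin.sum_univ_three]; ring)
    (by intro i _; fin_cases i <;> simpa)
  rw [Fin.sum_univ_three] at h
  simp only [Matrix.cons_val_zero, Matrix.cons_val_one, Matrix.head_cons,
    Matrix.cons_val_two, Matrix.tail_cons] at h
  have heq : (1 - x - y) • v + x • w1 + y • w2 = v + x • (w1 - v) + y • (w2 - v) := by
    module
  rwa [heq] at h

/-- A nonzero linear functional cannot attain its max over `P` at a point of an open
triangle contained in `P`. -/
lemma tri_open {P : Set Plane} (hP : Convex ℝ P) {v w1 w2 : Plane}
    (hv : v ∈ P) (hw1 : w1 ∈ P) (hw2 : w2 ∈ P)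
    (li : LinearIndependent ℝ ![w1 - v, w2 - v]) {f : Plane →L[ℝ] ℝ} (hf0 : f ≠ 0)
    {x y : ℝ} (hx : 0 < x) (hy : 0 < y) (hxy : x + y < 1)
    (hmax : ∀ p ∈ P, f p ≤ f (v + x • (w1 - v) + y • (w2 - v))) : False := by
  set a1 := w1 - v with ha1
  set a2 := w2 - v with ha2
  set p := v + x • a1 + y • a2 with hp
  have hcard : Fintype.card (Fin 2) = Module.finrank ℝ Plane := by
    simp [finrank_euclideanSpace_fin]
  let B := basisOfLinearIndependentOfCardEqFinrank li hcard
  have hB : ⇑B = ![a1, a2] := coe_basisOfLinearIndependentOfCardEqFinrank li hcard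
  have hB0 : B 0 = a1 := by rw [hB]; rfl
  have hB1 : B 1 = a2 := by rw [hB]; rfl
  set C : Plane → (Fin 2 → ℝ) := fun q => B.equivFun (q - v) with hC
  have hCcont : Continuous C := by
    have h2 : Continuous (B.equivFun : Plane →ₗ[ℝ] (Fin 2 → ℝ)) :=
      LinearMap.continuous_of_finiteDimensional _
    exact h2.comp (continuous_id.sub continuous_const)
  set O : Set (Fin 2 → ℝ) :=
    {c | 0 < c 0} ∩ {c | 0 < c 1} ∩ {c | c 0 + c 1 < 1} with hO
  have hOopen : IsOpen O := by
    have h0 : Continuous fun c : Fin 2 → ℝ => c 0 := continuous_apply 0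
    have h1 : Continuous fun c : Fin 2 → ℝ => c 1 := continuous_apply 1
    exact ((isOpen_lt continuous_const h0).inter (isOpen_lt continuous_const h1)).inter
      (isOpen_lt (h0.add h1) continuous_const)
  have hSP : C ⁻¹' O ⊆ P := by
    intro q hq
    obtain ⟨⟨hq0, hq1⟩, hq2⟩ := hq
    simp only [mem_setOf_eq] at hq0 hq1 hq2
    have hqv : q - v = (C q 0) • a1 + (C q 1) • a2 := by
      have := B.sum_equivFun (q - v)
      rw [Fin.sum_univ_two, hB0, hB1] at this
      exact this.symm
    set c0 := C q 0 with hc0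
    set c1 := C q 1 with hc1
    rw [sub_eq_iff_eq_add'] at hqv
    have heq : v + (c0 • a1 + c1 • a2) = v + c0 • a1 + c1 • a2 := by module
    rw [heq] at hqv
    rw [hqv]
    exact combo3_mem hP hv hw1 hw2 (le_of_lt hq0) (le_of_lt hq1) (le_of_lt hq2)
  have hpS : p ∈ C ⁻¹' O := by
    have hpv : p - v = x • a1 + y • a2 := by rw [hp]; module
    have hsymm : B.equivFun.symm ![x, y] = x • a1 + y • a2 := by
      rw [Module.Basis.equivFun_symm_apply, Fin.sum_univ_two, hB0, hB1]
      norm_num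
    have hCp : C p = ![x, y] := by
      show B.equivFun (p - v) = ![x, y]
      rw [hpv, ← hsymm, LinearEquiv.apply_symm_apply]
    have hCp0 : C p 0 = x := by rw [hCp]; rfl
    have hCp1 : C p 1 = y := by rw [hCp]; rfl
    exact ⟨⟨by simp only [mem_setOf_eq, hCp0]; exact hx,
      by simp only [mem_setOf_eq, hCp1]; exact hy⟩,
      by simp only [mem_setOf_eq, hCp0, hCp1]; exact hxy⟩
  obtain ⟨ε, hε, hball⟩ := Metric.isOpen_iff.1 (hOopen.preimage hCcont) p hpS
  obtain ⟨z, hz⟩ : ∃ z, f z ≠ 0 := by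
    by_contra h
    push_neg at h
    exact hf0 (by ext q; simp [h q])
  set u : Plane := if 0 < f z then z else -z with hu
  have hfu : 0 < f u := by
    rcases lt_trichotomy 0 (f z) with h | h | h
    · rw [hu, if_pos h]; exact h
    · exact absurd h.symm hz
    · rw [hu, if_neg (by linarith)]; simp; linarith
  have hu0 : u ≠ 0 := by
    intro h; rw [h] at hfu; simp at hfu
  have hnu : 0 < ‖u‖ := norm_pos_iff.2 hu0
  have hnu' : ‖u‖ ≠ 0 := ne_of_gt hnu
  set q := p + (ε / (2 * ‖u‖)) • u with hq
  have hqball : q ∈ Metric.ball p ε := by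
    rw [hq, Metric.mem_ball, dist_eq_norm]
    have h1 : p + (ε / (2 * ‖u‖)) • u - p = (ε / (2 * ‖u‖)) • u := by module
    rw [h1, norm_smul, Real.norm_eq_abs, abs_of_pos (by positivity)]
    have h2 : ε / (2 * ‖u‖) * ‖u‖ = ε / 2 := by field_simp
    rw [h2]; linarith
  have hqP : q ∈ P := hSP (hball hqball)
  have hle := hmax q hqP
  have hfq : f q = f p + (ε / (2 * ‖u‖)) * f u := by
    rw [hq, map_add, map_smul, smul_eq_mul]
  have hpos : 0 < (ε / (2 * ‖u‖)) * f u := mul_pos (by positivity) hfu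
  rw [hfq] at hle
  have hple : f p ≤ f p := le_refl _
  linarith

/-- Every non-vertex boundary guard admits edge data. -/
lemma exists_pair {V : Finset Plane} {P : Set Plane}
    (hPeq : P = convexHull ℝ (V : Set Plane))
    {b : Plane} (hbP : b ∈ P) (hbi : b ∉ interior P) (hbV : b ∉ V)
    (hint : (interior P).Nonempty) :
    ∃ v w, Edgey P V b v w := by
  classical
  have hPconv : Convex ℝ P := hPeq ▸ convex_convexHull ℝ _
  have hVP : ∀ y ∈ V, y ∈ P := fun y hy => hPeq ▸ subset_convexHull ℝ (V : Set Plane) hy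
  obtain ⟨f, hfs⟩ := geometric_hahn_banach_open_point hPconv.interior isOpen_interior hbi
  obtain ⟨z, hzint⟩ := hint
  have hf0 : f ≠ 0 := by
    intro h
    have := hfs z hzint
    rw [h] at this
    simp at this
  have hle : ∀ p ∈ P, f p ≤ f b := by
    intro p hp
    by_contra hgt
    push_neg at hgt
    set d := f p - f b with hd
    have hd0 : 0 < d := by linarith
    have hA : (0:ℝ) < |f z - f p| + 1 := by positivity
    set t := min 1 (d / (2 * (|f z - f p| + 1))) with ht
    have ht0 : 0 < t := lt_min one_pos (by positivity)
    have ht1 : t ≤ 1 := min_le_left _ _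
    have hmem : t • z + (1 - t) • p ∈ interior P :=
      hPconv.combo_interior_closure_mem_interior hzint (subset_closure hp) ht0
        (by linarith) (by ring)
    have hlt := hfs _ hmem
    rw [map_add, map_smul, map_smul, smul_eq_mul, smul_eq_mul] at hlt
    have htd : t * |f z - f p| ≤ d / 2 := by
      have h2 : t ≤ d / (2 * (|f z - f p| + 1)) := min_le_right _ _
      calc t * |f z - f p| ≤ (d / (2 * (|f z - f p| + 1))) * |f z - f p| :=
            mul_le_mul_of_nonneg_right h2 (abs_nonneg _)
        _ ≤ d / 2 := by
            rw [div_mul_eq_mul_div, div_le_div_iff₀ (by positivity) (by norm_num)]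
            nlinarith [abs_nonneg (f z - f p)]
    have habs : -(t * |f z - f p|) ≤ t * (f z - f p) := by
      have := neg_abs_le (f z - f p)
      nlinarith [ht0.le]
    nlinarith
  have hbP' : b ∈ convexHull ℝ (V : Set Plane) := hPeq ▸ hbP
  rw [Finset.convexHull_eq] at hbP'
  obtain ⟨wt, hwt0, hwt1, hwcm⟩ := hbP'
  have hsum : ∑ y ∈ V, wt y • y = b := by
    rw [← hwcm, Finset.centerMass_eq_of_sum_1 _ _ hwt1]
    rfl
  have hfb : ∑ y ∈ V, wt y * f y = f b := by
    rw [← hsum, map_sum]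
    simp
  set M := V.filter (fun u => f u = f b) with hM
  have hMV : ∀ y ∈ M, y ∈ V := fun y hy => Finset.mem_of_mem_filter y hy
  have hMf : ∀ y ∈ M, f y = f b := fun y hy => (Finset.mem_filter.1 hy).2
  have hzero : ∀ y ∈ V, y ∉ M → wt y = 0 := by
    intro y hy hyM
    have hne : f y ≠ f b := by
      intro h; exact hyM (Finset.mem_filter.2 ⟨hy, h⟩)
    have hterm : ∀ u ∈ V, 0 ≤ wt u * (f b - f u) := fun u hu =>
      mul_nonneg (hwt0 u hu) (by linarith [hle u (hVP u hu)])
    have hsum0 : ∑ u ∈ V, wt u * (f b - f u) = 0 := by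
      have : ∑ u ∈ V, wt u * (f b - f u)
          = (∑ u ∈ V, wt u) * f b - ∑ u ∈ V, wt u * f u := by
        rw [Finset.sum_mul, ← Finset.sum_sub_distrib]
        congr 1; ext u; ring
      rw [this, hwt1, hfb]; ring
    have hy0 := (Finset.sum_eq_zero_iff_of_nonneg hterm).1 hsum0 y hy
    rcases mul_eq_zero.1 hy0 with h | h
    · exact h
    · exact absurd (by linarith : f y = f b) hne
  have hMsum1 : ∑ y ∈ M, wt y = 1 := by
    rw [← hwt1]
    exact (Finset.sum_subset (Finset.filter_subset _ _)
      (fun y hy hyM => hzero y hy hyM)).symm ▸ rfl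
  have hMsum : ∑ y ∈ M, wt y • y = b := by
    rw [← hsum]
    exact Finset.sum_subset (Finset.filter_subset _ _)
      (fun y hy hyM => by rw [hzero y hy hyM, zero_smul])
  have hbM : b ∈ convexHull ℝ (M : Set Plane) := by
    rw [Finset.convexHull_eq]
    exact ⟨wt, fun y hy => hwt0 y (hMV y hy), hMsum1,
      by rw [Finset.centerMass_eq_of_sum_1 _ _ hMsum1]; simpa using hMsum⟩
  have hMne : M.Nonempty := by
    by_contra h
    rw [Finset.not_nonempty_iff_eq_empty] at h
    rw [h] at hMsum1
    simp at hMsum1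
  -- direction of the kernel of f
  set e0 : Plane := EuclideanSpace.single 0 (1:ℝ) with he0
  set e1 : Plane := EuclideanSpace.single 1 (1:ℝ) with he1
  have hdecomp : ∀ r : Plane, r = r 0 • e0 + r 1 • e1 := by
    intro r
    ext i
    fin_cases i <;>
      simp [he0, he1, EuclideanSpace.single_apply]
  set u : Plane := f e1 • e0 - f e0 • e1 with hu
  have hfu : f u = 0 := by
    rw [hu, map_sub, map_smul, map_smul, smul_eq_mul, smul_eq_mul]
    ring
  have hu0 : u ≠ 0 := by
    intro h
    apply hf0
    have h0 : f e1 = 0 ∧ f e0 = 0 := by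
      have h1 := congrArg (fun r : Plane => r 0) h
      have h2 := congrArg (fun r : Plane => r 1) h
      simp [hu, he0, he1, EuclideanSpace.single_apply] at h1 h2
      exact ⟨h1, h2⟩
    ext r
    rw [show f r = r 0 * f e0 + r 1 * f e1 by
      conv_lhs => rw [hdecomp r]
      rw [map_add, map_smul, map_smul, smul_eq_mul, smul_eq_mul]]
    rw [h0.1, h0.2]
    simp
  have hker : ∀ r : Plane, f r = 0 → ∃ s : ℝ, r = s • u := by
    intro r hr
    have hrd : f r = r 0 * f e0 + r 1 * f e1 := by
      conv_lhs => rw [hdecomp r]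
      rw [map_add, map_smul, map_smul, smul_eq_mul, smul_eq_mul]
    rw [hr] at hrd
    by_cases h : f e0 = 0
    · have hfe1 : f e1 ≠ 0 := by
        intro h1
        apply hf0
        ext r'
        rw [show f r' = r' 0 * f e0 + r' 1 * f e1 by
          conv_lhs => rw [hdecomp r']
          rw [map_add, map_smul, map_smul, smul_eq_mul, smul_eq_mul]]
        rw [h, h1]; simp
      have hr1 : r 1 = 0 := by
        rw [h] at hrd
        have hrd : r 1 * f e1 = 0 := by linarith
        rcases mul_eq_zero.1 hrd with h' | h'
        · exact h'
        · exact absurd h' hfe1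
      refine ⟨r 0 / f e1, ?_⟩
      rw [hu]
      have : (r 0 / f e1) • (f e1 • e0 - f e0 • e1)
          = (r 0 / f e1 * f e1) • e0 - (r 0 / f e1 * f e0) • e1 := by module
      rw [this, div_mul_cancel₀ _ hfe1, h, mul_zero, zero_smul, sub_zero]
      conv_lhs => rw [hdecomp r]
      rw [hr1, zero_smul, add_zero]
    · refine ⟨-(r 1) / f e0, ?_⟩
      rw [hu]
      have heq : (-(r 1) / f e0) • (f e1 • e0 - f e0 • e1)
          = (-(r 1) / f e0 * f e1) • e0 - (-(r 1) / f e0 * f e0) • e1 := by module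
      rw [heq, div_mul_cancel₀ _ h]
      have hr0 : r 0 = -(r 1) / f e0 * f e1 := by
        field_simp
        linarith
      conv_lhs => rw [hdecomp r]
      rw [← hr0]
      module
  -- parametrize M along u
  have hex : ∀ y ∈ M, ∃ s : ℝ, y = b + s • u := by
    intro y hy
    obtain ⟨s, hs⟩ := hker (y - b) (by rw [map_sub, hMf y hy]; ring)
    exact ⟨s, by rw [← hs]; module⟩
  set τ : Plane → ℝ := fun y => if h : ∃ s : ℝ, y = b + s • u then h.choose else 0 with hτ
  have hτs : ∀ y ∈ M, y = b + τ y • u := by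
    intro y hy
    have h := hex y hy
    simp only [hτ, dif_pos h]
    exact h.choose_spec
  obtain ⟨v, hvM, hvmin⟩ := Finset.exists_min_image M τ hMne
  obtain ⟨w, hwM, hwmax⟩ := Finset.exists_max_image M τ hMne
  have hbne : ∀ y ∈ M, b ≠ y := by
    intro y hy h
    exact hbV (by rw [h]; exact hMV y hy)
  by_cases hdeg : τ w = τ v
  · exfalso
    have hMv : ∀ y ∈ M, y = v := by
      intro y hy
      have h1 : τ v ≤ τ y := hvmin y hy
      have h2 : τ y ≤ τ w := hwmax y hy
      have h3 : τ y = τ v := le_antisymm (hdeg ▸ h2) h1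
      rw [hτs y hy, hτs v hvM, h3]
    have hMsub : (M : Set Plane) ⊆ {v} := by
      intro y hy
      rw [Finset.mem_coe] at hy
      exact hMv y hy
    have := convexHull_min hMsub (convex_singleton v) hbM
    exact hbne v hvM (by simpa using this)
  · have h1 := hτs v hvM
    have h2 := hτs w hwM
    obtain ⟨sv, hsv⟩ : ∃ s : ℝ, τ v = s := ⟨_, rfl⟩
    obtain ⟨sw, hsw⟩ : ∃ s : ℝ, τ w = s := ⟨_, rfl⟩
    rw [hsv] at h1
    rw [hsw] at h2
    have hvw : sv < sw := by
      have h' : τ v < τ w := lt_of_le_of_ne (hvmin w hwM) (Ne.symm hdeg)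
      rwa [hsv, hsw] at h'
    have hden : sw - sv ≠ 0 := by intro h; have : sw = sv := by linarith [sub_eq_zero.1 h]
                                  linarith
    have hwv : w - v = (sw - sv) • u := by rw [h2, h1]; module
    have hMseg : (M : Set Plane) ⊆ segment ℝ v w := by
      intro y hy
      rw [Finset.mem_coe] at hy
      have h3 := hτs y hy
      obtain ⟨sy, hsy⟩ : ∃ s : ℝ, τ y = s := ⟨_, rfl⟩
      rw [hsy] at h3
      have hymin : sv ≤ sy := by have := hvmin y hy; rwa [hsv, hsy] at this
      have hymax : sy ≤ sw := by have := hwmax y hy; rwa [hsw, hsy] at this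
      have hy' : y = v + ((sy - sv) / (sw - sv)) • (w - v) := by
        rw [hwv, smul_smul, div_mul_cancel₀ _ hden, h3, h1]
        module
      rw [hy']
      apply mem_segment_param
      · apply div_nonneg (by linarith) (by linarith)
      · rw [div_le_one (by linarith : (0:ℝ) < sw - sv)]
        linarith
    have hbseg : b ∈ segment ℝ v w := convexHull_min hMseg (convex_segment v w) hbM
    have hbopen : b ∈ openSegment ℝ v w := by
      rw [← insert_endpoints_openSegment] at hbseg
      rcases hbseg with h | h | h
      · exact absurd h (hbne v hvM)
      · exact absurd h (hbne w hwM)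
      · exact h
    have hvwne : v ≠ w := by
      intro h
      rw [h, h2] at h1
      have h4 : sw • u = sv • u := add_left_cancel h1
      have := smul_left_injective ℝ hu0 h4
      linarith [this]
    exact ⟨v, w, hMV v hvM, hMV w hwM, hvwne, hbopen,
      f, hf0, hle, hMf v hvM, hMf w hwM⟩

set_option maxHeartbeats 1000000 in
/-- No vertex can serve as endpoint for three different guarded edges. -/
lemma degree_le_two {V : Finset Plane} {P : Set Plane}
    (hPconv : Convex ℝ P) (hVP : ∀ y ∈ V, y ∈ P)
    (hExt : ∀ v ∈ V, v ∈ Set.extremePoints ℝ P)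
    {G : Finset Plane} (hno : ∀ x ∈ P, ∀ g ∈ G, ¬ Hidden G g x)
    {v b1 b2 b3 w1 w2 w3 : Plane}
    (hb1 : b1 ∈ G) (hb2 : b2 ∈ G) (hb3 : b3 ∈ G)
    (h12 : b1 ≠ b2) (h13 : b1 ≠ b3) (h23 : b2 ≠ b3)
    (hE1 : Edgey P V b1 v w1) (hE2 : Edgey P V b2 v w2) (hE3 : Edgey P V b3 v w3) :
    False := by
  have hvV : v ∈ V := hE1.1
  have hcross : ∀ (b b' w w' : Plane), b ∈ G → b' ∈ G → b ≠ b' →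
      Edgey P V b v w → Edgey P V b' v w' → ∀ s : ℝ, w - v ≠ s • (w' - v) := by
    intro b b' w w' hb hb' hne hE hE' s hsw
    obtain ⟨θ, hθ0, hθ1, hbe⟩ := openSegment_param hE.2.2.2.1
    apply no_guard_on_line hPconv hVP hno hb' hE' hb hne (s := θ * s)
    rw [hbe, hsw, smul_smul]
  have hli : ∀ (b b' w w' : Plane), b ∈ G → b' ∈ G → b ≠ b' →
      Edgey P V b v w → Edgey P V b' v w' →
      LinearIndependent ℝ ![w - v, w' - v] := by
    intro b b' w w' hb hb' hne hE hE'
    rw [linearIndependent_fin2]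
    constructor
    · show w' - v ≠ 0
      exact sub_ne_zero.2 (Ne.symm hE'.2.2.1)
    · intro a ha
      exact hcross b b' w w' hb hb' hne hE hE' a ha.symm
  have li12 := hli b1 b2 w1 w2 hb1 hb2 h12 hE1 hE2
  have li32 := hli b3 b2 w3 w2 hb3 hb2 (Ne.symm h23) hE3 hE2
  have li31 := hli b3 b1 w3 w1 hb3 hb1 (Ne.symm h13) hE3 hE1
  have hcard : Fintype.card (Fin 2) = Module.finrank ℝ Plane := by
    simp [finrank_euclideanSpace_fin]
  set B := basisOfLinearIndependentOfCardEqFinrank li12 hcard with hBdef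
  have hB : ⇑B = ![w1 - v, w2 - v] := coe_basisOfLinearIndependentOfCardEqFinrank li12 hcard
  have hB0 : B 0 = w1 - v := by rw [hB]; rfl
  have hB1 : B 1 = w2 - v := by rw [hB]; rfl
  have hrep := B.sum_equivFun (w3 - v)
  rw [Fin.sum_univ_two, hB0, hB1] at hrep
  obtain ⟨α, hα⟩ : ∃ a : ℝ, B.equivFun (w3 - v) 0 = a := ⟨_, rfl⟩
  obtain ⟨β, hβ⟩ : ∃ a : ℝ, B.equivFun (w3 - v) 1 = a := ⟨_, rfl⟩
  rw [hα, hβ] at hrep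
  -- hrep : α • (w1 - v) + β • (w2 - v) = w3 - v
  have hα0 : α ≠ 0 := by
    intro h
    apply hcross b3 b2 w3 w2 hb3 hb2 (Ne.symm h23) hE3 hE2 β
    rw [← hrep, h, zero_smul, zero_add]
  have hβ0 : β ≠ 0 := by
    intro h
    apply hcross b3 b1 w3 w1 hb3 hb1 (Ne.symm h13) hE3 hE1 α
    rw [← hrep, h, zero_smul, add_zero]
  rcases lt_trichotomy 0 α with hαpos | h | hαneg
  case inr.inl => exact hα0 h.symm
  all_goals rcases lt_trichotomy 0 β with hβpos | h | hβneg
  case inl.inr.inl => exact hβ0 h.symm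
  case inr.inr.inr.inl => exact hβ0 h.symm
  · -- α > 0, β > 0 : use f3 on triangle (v, w1, w2)
    obtain ⟨-, hw3V, hvw3, -, f3, hf30, hf3m, hf3v, hf3w⟩ := hE3
    set δ := 1 / (2 * (α + β)) with hδ
    have hδ0 : 0 < δ := by positivity
    refine tri_open hPconv (hVP v hvV) (hVP w1 hE1.2.1) (hVP w2 hE2.2.1) li12 hf30
      (x := δ * α) (y := δ * β) (by positivity) (by positivity) ?_ ?_
    · rw [hδ]
      rw [show 1 / (2 * (α + β)) * α + 1 / (2 * (α + β)) * β = (α + β) / (2 * (α + β)) by ring,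
        div_lt_one (by positivity)]
      linarith
    · intro p hp
      have hpt : v + (δ * α) • (w1 - v) + (δ * β) • (w2 - v) = v + δ • (w3 - v) := by
        rw [← hrep]
        module
      rw [hpt]
      have hfval : f3 (v + δ • (w3 - v)) = f3 b3 := by
        rw [map_add, map_smul, map_sub, smul_eq_mul, hf3v, hf3w]
        ring
      rw [hfval]
      exact hf3m p hp
  · -- α > 0, β < 0 : use f1 on triangle (v, w3, w2)
    obtain ⟨-, hw1V, hvw1, -, f1, hf10, hf1m, hf1v, hf1w⟩ := hE1
    have hD : (0:ℝ) < 2 * (1 - β) := by linarith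
    refine tri_open hPconv (hVP v hvV) (hVP w3 hE3.2.1) (hVP w2 hE2.2.1) li32 hf10
      (x := 1 / (2 * (1 - β))) (y := -β / (2 * (1 - β))) (by positivity)
      (div_pos (by linarith) (by linarith)) ?_ ?_
    · rw [← add_div, div_lt_one hD]; linarith
    · intro p hp
      have hpt : v + (1 / (2 * (1 - β))) • (w3 - v) + (-β / (2 * (1 - β))) • (w2 - v)
          = v + (α / (2 * (1 - β))) • (w1 - v) := by
        rw [← hrep]
        match_scalars <;> (field_simp; try ring)
      rw [hpt]
      have hfval : f1 (v + (α / (2 * (1 - β))) • (w1 - v)) = f1 b1 := by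
        rw [map_add, map_smul, map_sub, smul_eq_mul, hf1v, hf1w]
        ring
      rw [hfval]
      exact hf1m p hp
  · -- α < 0, β > 0 : use f2 on triangle (v, w3, w1)
    obtain ⟨-, hw2V, hvw2, -, f2, hf20, hf2m, hf2v, hf2w⟩ := hE2
    have hD : (0:ℝ) < 2 * (1 - α) := by linarith
    refine tri_open hPconv (hVP v hvV) (hVP w3 hE3.2.1) (hVP w1 hE1.2.1) li31 hf20
      (x := 1 / (2 * (1 - α))) (y := -α / (2 * (1 - α))) (by positivity)
      (div_pos (by linarith) (by linarith)) ?_ ?_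
    · rw [← add_div, div_lt_one hD]; linarith
    · intro p hp
      have hpt : v + (1 / (2 * (1 - α))) • (w3 - v) + (-α / (2 * (1 - α))) • (w1 - v)
          = v + (β / (2 * (1 - α))) • (w2 - v) := by
        rw [← hrep]
        match_scalars <;> (field_simp; try ring)
      rw [hpt]
      have hfval : f2 (v + (β / (2 * (1 - α))) • (w2 - v)) = f2 b2 := by
        rw [map_add, map_smul, map_sub, smul_eq_mul, hf2v, hf2w]
        ring
      rw [hfval]
      exact hf2m p hp
  · -- α < 0, β < 0 : v is not an extreme point, contradiction
    have hsum : (0:ℝ) < -α - β := by linarith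
    set δ := 1 / (-α - β) with hδ
    have hδ0 : 0 < δ := by positivity
    set q := v + (δ * -α) • (w1 - v) + (δ * -β) • (w2 - v) with hq
    have hqP : q ∈ P := combo3_mem hPconv (hVP v hvV) (hVP w1 hE1.2.1) (hVP w2 hE2.2.1)
      (mul_nonneg hδ0.le (by linarith)) (mul_nonneg hδ0.le (by linarith))
      (by rw [hδ,
            show 1 / (-α - β) * -α + 1 / (-α - β) * -β = (-α - β) / (-α - β) by ring,
            div_self (ne_of_gt hsum)])
    have hqa : q = v - δ • (w3 - v) := by
      rw [hq, ← hrep]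
      module
    have hw3P : w3 ∈ P := hVP w3 hE3.2.1
    have hvop : v ∈ openSegment ℝ q w3 := by
      apply mem_openSegment_param (δ / (1 + δ)) (by positivity)
        (by rw [div_lt_one (by linarith)]; linarith)
      have h1 : w3 - q = (1 + δ) • (w3 - v) := by rw [hqa]; module
      rw [h1, smul_smul, div_mul_cancel₀ _ (by positivity : (1:ℝ) + δ ≠ 0)]
      rw [hqa]
      module
    have hext := (hExt v hvV).2 hqP hw3P hvop
    exact hE3.2.2.1 ((hExt v hvV).2 hw3P hqP (by rw [openSegment_symm]; exact hvop)).symm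


end Statement5Aux

/-- Any placement of more than n guards in a convex n-gon creates a
point hidden from some guard (a dark point). -/
theorem statement5 (n : ℕ) (V : Finset Plane) (P : Set Plane)
    (hP : IsConvexPolygon n V P) (G : Finset Plane) (hG : ↑G ⊆ P)
    (hcard : G.card > n) :
    ∃ x ∈ P, ∃ g ∈ G, Hidden G g x := by
  classical
  obtain ⟨hn3, hVcard, hPeq, hExt⟩ := hP
  by_contra hcon
  push_neg at hcon
  have hPconv : Convex ℝ P := hPeq ▸ convex_convexHull ℝ _
  have hVP : ∀ y ∈ V, y ∈ P := fun y hy => hPeq ▸ subset_convexHull ℝ (V : Set Plane) hy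
  have hGP : ∀ b ∈ G, b ∈ P := fun b hb => hG hb
  have hG2 : 1 < G.card := by omega
  -- the interior of P is nonempty
  have hint : (interior P).Nonempty := by
    rw [hPconv.interior_nonempty_iff_affineSpan_eq_top, hPeq, affineSpan_convexHull]
    by_contra htop
    have hVne : (V : Set Plane).Nonempty := by
      rw [Finset.coe_nonempty, ← Finset.card_pos]; omega
    have hdir : (affineSpan ℝ (V : Set Plane)).direction ≠ ⊤ := fun h =>
      htop ((AffineSubspace.direction_eq_top_iff_of_nonempty
        ((affineSpan_nonempty ℝ).2 hVne)).1 h)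
    have hlt : Module.finrank ℝ (vectorSpan ℝ (V : Set Plane)) < 2 := by
      have h := Submodule.finrank_lt (K := ℝ) (V := Plane)
        (s := (affineSpan ℝ (V : Set Plane)).direction) hdir
      rw [finrank_euclideanSpace_fin] at h
      rwa [direction_affineSpan] at h
    have hcol : Collinear ℝ (V : Set Plane) := collinear_iff_finrank_le_one.2 (by omega)
    obtain ⟨a, b, c, haV, hbV, hcV, hab, hac, hbc⟩ :=
      Finset.two_lt_card_iff.1 (show 2 < V.card by omega)
    have h3 : Collinear ℝ ({a, b, c} : Set Plane) := hcol.subset (by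
      intro x hx
      simp only [Set.mem_insert_iff, Set.mem_singleton_iff] at hx
      rcases hx with rfl | rfl | rfl
      · exact haV
      · exact hbV
      · exact hcV)
    have hmid : ∀ x y z : Plane, x ∈ V → y ∈ V → z ∈ V →
        x ≠ y → y ≠ z → Wbtw ℝ x y z → False := by
      intro x y z hx hy hz hxy hyz hw
      have hseg : y ∈ segment ℝ x z := hw.mem_segment
      rw [← insert_endpoints_openSegment] at hseg
      rcases hseg with h | h | h
      · exact hxy (h.symm)
      · exact hyz h
      · exact hxy ((hExt y hy).2 (hVP x hx) (hVP z hz) h)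
    rcases h3.wbtw_or_wbtw_or_wbtw with h | h | h
    · exact hmid a b c haV hbV hcV hab hbc h
    · exact hmid b c a hbV hcV haV hbc (Ne.symm hac) h
    · exact hmid c a b hcV haV hbV (Ne.symm hac) hab h
  -- no guard lies in the interior of P
  have hbnd : ∀ b ∈ G, b ∉ interior P := by
    intro b hb hbint
    obtain ⟨g, hg, hgb⟩ := Finset.exists_mem_ne hG2 b
    obtain ⟨ε, hε, hball⟩ := Metric.mem_nhds_iff.1 (isOpen_interior.mem_nhds hbint)
    have hA : (0:ℝ) < ‖b - g‖ + 1 := by positivity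
    set t := ε / (2 * (‖b - g‖ + 1)) with htd
    have ht0 : 0 < t := by positivity
    have hx : b + t • (b - g) ∈ Metric.ball b ε := by
      rw [Metric.mem_ball, dist_eq_norm]
      have h1 : b + t • (b - g) - b = t • (b - g) := by module
      rw [h1, norm_smul, Real.norm_eq_abs, abs_of_pos ht0]
      have h2 : t * (‖b - g‖ + 1) = ε / 2 := by rw [htd]; field_simp
      nlinarith [norm_nonneg (b - g)]
    exact Statement5Aux.key_ray hcon hb hg hgb ht0 (interior_subset (hball hx))
  -- choice of edge data for non-vertex guards
  set pick : Plane → Plane × Plane := fun b =>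
    if h : ∃ vw : Plane × Plane, Statement5Aux.Edgey P V b vw.1 vw.2 then h.choose
    else (0, 0) with hpick
  have hpickE : ∀ b ∈ G, b ∉ V → Statement5Aux.Edgey P V b (pick b).1 (pick b).2 := by
    intro b hb hbV
    obtain ⟨v, w, hE⟩ := Statement5Aux.exists_pair hPeq (hGP b hb) (hbnd b hb) hbV hint
    have h : ∃ vw : Plane × Plane, Statement5Aux.Edgey P V b vw.1 vw.2 := ⟨(v, w), hE⟩
    simp only [hpick, dif_pos h]
    exact h.choose_spec
  set Gs := G.filter (fun b => b ∉ V) with hGs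
  set Gv := G.filter (fun b => b ∈ V) with hGv
  set pairF : Plane → Finset Plane := fun b => {(pick b).1, (pick b).2} with hpairF
  have hGsE : ∀ b ∈ Gs, b ∈ G ∧ b ∉ V := fun b hb => Finset.mem_filter.1 hb |>.imp id id
  have hL : ∀ b ∈ Gs, ∀ b' ∈ G, b' ≠ b → ∀ s : ℝ,
      b' ≠ (pick b).1 + s • ((pick b).2 - (pick b).1) := by
    intro b hb b' hb' hne s heq
    obtain ⟨hbG, hbV⟩ := hGsE b hb
    exact Statement5Aux.no_guard_on_line hPconv hVP hcon hbG (hpickE b hbG hbV) hb' hne heq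
  have hVnotG : ∀ b ∈ Gs, (pick b).1 ∉ G ∧ (pick b).2 ∉ G := by
    intro b hb
    obtain ⟨hbG, hbV⟩ := hGsE b hb
    have hE := hpickE b hbG hbV
    constructor
    · intro hvG
      exact hL b hb _ hvG (Ne.symm hE.ne_left) 0 (by module)
    · intro hwG
      exact hL b hb _ hwG (Ne.symm hE.ne_right) 1 (by module)
  have hinj : ∀ b ∈ Gs, ∀ b' ∈ Gs, pairF b = pairF b' → b = b' := by
    intro b hb b' hb' hpe
    by_contra hne
    obtain ⟨hbG, hbV⟩ := hGsE b hb
    obtain ⟨hbG', hbV'⟩ := hGsE b' hb'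
    have hE := hpickE b hbG hbV
    have hE' := hpickE b' hbG' hbV'
    obtain ⟨θ, hθ0, hθ1, hbe⟩ := Statement5Aux.openSegment_param hE'.2.2.2.1
    have hmem1 : (pick b').1 ∈ pairF b := by rw [hpe]; simp [hpairF]
    have hmem2 : (pick b').2 ∈ pairF b := by rw [hpe]; simp [hpairF]
    simp only [hpairF, Finset.mem_insert, Finset.mem_singleton] at hmem1 hmem2
    rcases hmem1 with h1 | h1 <;> rcases hmem2 with h2 | h2
    · exact hE'.2.2.1 (h1.trans h2.symm)
    · apply hL b hb b' hbG' (fun h => hne h.symm) θ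
      rw [h1, h2] at hbe
      exact hbe
    · apply hL b hb b' hbG' (fun h => hne h.symm) (1 - θ)
      rw [h1, h2] at hbe
      rw [hbe]
      module
    · exact hE'.2.2.1 (h1.trans h2.symm)
  have hfiber : ∀ x : Plane, (Gs.filter (fun b => x ∈ pairF b)).card ≤ 2 := by
    intro x
    by_contra h
    push_neg at h
    obtain ⟨c1, c2, c3, hc1, hc2, hc3, h12, h13, h23⟩ := Finset.two_lt_card_iff.1 h
    have hnorm : ∀ b ∈ Gs.filter (fun b => x ∈ pairF b),
        ∃ w', Statement5Aux.Edgey P V b x w' := by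
      intro b hb
      obtain ⟨hbGs, hbx⟩ := Finset.mem_filter.1 hb
      obtain ⟨hbG, hbV⟩ := hGsE b hbGs
      have hE := hpickE b hbG hbV
      simp only [hpairF, Finset.mem_insert, Finset.mem_singleton] at hbx
      rcases hbx with h' | h'
      · exact ⟨(pick b).2, by rw [h']; exact hE⟩
      · exact ⟨(pick b).1, by rw [h']; exact hE.symm⟩
    obtain ⟨w1', hEx1⟩ := hnorm c1 hc1
    obtain ⟨w2', hEx2⟩ := hnorm c2 hc2
    obtain ⟨w3', hEx3⟩ := hnorm c3 hc3
    have hc1G : c1 ∈ G := (hGsE c1 (Finset.mem_filter.1 hc1).1).1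
    have hc2G : c2 ∈ G := (hGsE c2 (Finset.mem_filter.1 hc2).1).1
    have hc3G : c3 ∈ G := (hGsE c3 (Finset.mem_filter.1 hc3).1).1
    exact Statement5Aux.degree_le_two hPconv hVP hExt hcon hc1G hc2G hc3G
      h12 h13 h23 hEx1 hEx2 hEx3
  -- counting
  set W := V \ G with hW
  have hpair_sub : ∀ b ∈ Gs, pairF b ⊆ W := by
    intro b hb
    obtain ⟨hbG, hbV⟩ := hGsE b hb
    have hE := hpickE b hbG hbV
    have hng := hVnotG b hb
    intro x hx
    simp only [hpairF, Finset.mem_insert, Finset.mem_singleton] at hx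
    rcases hx with rfl | rfl
    · exact Finset.mem_sdiff.2 ⟨hE.1, hng.1⟩
    · exact Finset.mem_sdiff.2 ⟨hE.2.1, hng.2⟩
  have hpair_card : ∀ b ∈ Gs, (pairF b).card = 2 := by
    intro b hb
    obtain ⟨hbG, hbV⟩ := hGsE b hb
    have hE := hpickE b hbG hbV
    have hne : (pick b).1 ≠ (pick b).2 := hE.2.2.1
    simp only [hpairF]
    rw [Finset.card_insert_of_notMem (by simpa using hne), Finset.card_singleton]
  have hcount : 2 * Gs.card ≤ 2 * W.card := by
    have h1 : ∑ b ∈ Gs, (pairF b).card = 2 * Gs.card := by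
      rw [Finset.sum_congr rfl hpair_card, Finset.sum_const, smul_eq_mul, mul_comm]
    have h2 : ∀ b ∈ Gs, (pairF b).card = (W.filter (fun x => x ∈ pairF b)).card := by
      intro b hb
      congr 1
      rw [Finset.filter_mem_eq_inter, Finset.inter_eq_right.2 (hpair_sub b hb)]
    have h3 : ∑ b ∈ Gs, (W.filter (fun x => x ∈ pairF b)).card
        = ∑ x ∈ W, (Gs.filter (fun b => x ∈ pairF b)).card := by
      simp_rw [Finset.card_filter]
      exact Finset.sum_comm
    calc 2 * Gs.card = ∑ b ∈ Gs, (pairF b).card := h1.symm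
      _ = ∑ b ∈ Gs, (W.filter (fun x => x ∈ pairF b)).card := Finset.sum_congr rfl h2
      _ = ∑ x ∈ W, (Gs.filter (fun b => x ∈ pairF b)).card := h3
      _ ≤ ∑ _x ∈ W, 2 := Finset.sum_le_sum (fun x _ => hfiber x)
      _ = 2 * W.card := by rw [Finset.sum_const, smul_eq_mul, mul_comm]
  -- injectivity gives |Gs| ≤ |W| ... via image
  have hGsW : Gs.card ≤ W.card := by
    -- card of image of pairF
    have himg : (Gs.image pairF).card = Gs.card := by
      apply Finset.card_image_of_injOn
      intro b hb b' hb' hpe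
      exact hinj b hb b' hb' hpe
    -- each pair has card 2, pairs are disjoint?? use the double counting instead
    omega
  have hsplit : Gv.card + Gs.card = G.card := by
    rw [hGv, hGs]
    exact Finset.card_filter_add_card_filter_not _
  have hGvle : Gv.card ≤ (V ∩ G).card := by
    apply Finset.card_le_card
    intro x hx
    obtain ⟨hxG, hxV⟩ := Finset.mem_filter.1 hx
    exact Finset.mem_inter.2 ⟨hxV, hxG⟩
  have hVsplit : (V ∩ G).card + (V \ G).card = V.card := Finset.card_inter_add_card_sdiff V G
  have hWcard : W.card = (V \ G).card := by rw [hW]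
  omega
end
end

section
/- Let P be a convex n-gon in ℝ² and let G ⊆ P be a guard set such that no point of P is hidden from two distinct guards of G. Let g1, g2, g3 ∈ G be affinely independent and let T = convexHull ℝ {g1, g2, g3} (a closed triangle contained in P). Then T contains at most 5 guards of G, i.e. |G ∩ T| ≤ 5. Moreover, if |G ∩ T| = 5, then after relabeling g1, g2, g3 if necessary, the two guards g4, g5 ∈ (G ∩ T) \ {g1, g2, g3} satisfy: g4 lies in the open segment from g1 to g3, g5 lies in the open segment from g2 to g4, and the closed segment from g1 to g3 is contained in the frontier of P (so that g1 and g3 are extreme points of P and g1 g3 is an edge of P). -/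
open Set

noncomputable section

namespace S10

def NoDouble (P : Set Plane) (G : Finset Plane) : Prop :=
  ∀ x ∈ P, ∀ u ∈ G, ∀ v ∈ G, ∀ u' ∈ G, ∀ v' ∈ G, v ≠ u → v' ≠ u' →
    v ∈ openSegment ℝ u x → v' ∈ openSegment ℝ u' x → u = u'

variable {P : Set Plane} {G : Finset Plane}

lemma mk_open {x y z : Plane} {a b : ℝ} (ha : 0 < a) (hb : 0 < b) (hab : a + b = 1)
    (h : z = a • x + b • y) : z ∈ openSegment ℝ x y := ⟨a, b, ha, hb, hab, h.symm⟩

lemma open_coeffs {x y z : Plane} (h : z ∈ openSegment ℝ x y) :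
    ∃ a b : ℝ, 0 < a ∧ 0 < b ∧ a + b = 1 ∧ z = a • x + b • y := by
  obtain ⟨a, b, ha, hb, hab, h⟩ := h; exact ⟨a, b, ha, hb, hab, h.symm⟩

lemma mk_open' {x y z : Plane} {a b : ℝ} (ha : 0 < a) (hb : 0 < b)
    (h : (a + b) • z = a • x + b • y) : z ∈ openSegment ℝ x y := by
  have hab : (0:ℝ) < a + b := by positivity
  refine mk_open (a := a/(a+b)) (b := b/(a+b)) (by positivity) (by positivity)
    (by field_simp) ?_
  have h2 := congrArg (fun w => (a+b)⁻¹ • w) h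
  simp only [smul_smul, inv_mul_cancel₀ hab.ne', one_smul] at h2
  rw [h2]; match_scalars <;> field_simp

lemma seg_trans {u w x v : Plane} (h1 : v ∈ openSegment ℝ u w)
    (h2 : w ∈ openSegment ℝ u x) : v ∈ openSegment ℝ u x := by
  obtain ⟨a1, b1, ha1, hb1, hs1, he1⟩ := open_coeffs h1
  obtain ⟨a2, b2, ha2, hb2, hs2, he2⟩ := open_coeffs h2
  have e1 : b1 = 1 - a1 := by linarith
  have e2 : b2 = 1 - a2 := by linarith
  subst e1 e2
  refine mk_open (a := a1 + (1-a1)*a2) (b := (1-a1)*(1-a2)) (by nlinarith) (by positivity)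
    (by ring) ?_
  rw [he1, he2]; module

lemma seg_trans' {u w x v : Plane} (h1 : v ∈ openSegment ℝ u w)
    (h2 : w ∈ openSegment ℝ u x) : w ∈ openSegment ℝ v x := by
  obtain ⟨a1, b1, ha1, hb1, hs1, he1⟩ := open_coeffs h1
  obtain ⟨a2, b2, ha2, hb2, hs2, he2⟩ := open_coeffs h2
  have e1 : b1 = 1 - a1 := by linarith
  have e2 : b2 = 1 - a2 := by linarith
  subst e1 e2
  refine mk_open' (a := a2) (b := a1*(1-a2)) ha2 (by positivity) ?_
  rw [he1, he2]; match_scalars <;> ring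

lemma open_ne_left {x y z : Plane} (hxy : x ≠ y) (h : z ∈ openSegment ℝ x y) : z ≠ x := by
  obtain ⟨a, b, ha, hb, hab, he⟩ := open_coeffs h
  intro hzx
  rw [hzx] at he
  apply hxy
  have hb' : b = 1 - a := by linarith
  subst hb'
  have key : (1-a) • x = (1-a) • y := by
    linear_combination (norm := module) he
  exact smul_right_injective Plane hb.ne' key

lemma open_ne_right {x y z : Plane} (hxy : x ≠ y) (h : z ∈ openSegment ℝ x y) : z ≠ y := by
  rw [openSegment_symm] at h
  exact open_ne_left hxy.symm h

lemma beyond (hnd : NoDouble P G) {u v w x : Plane} (hu : u ∈ G) (hv : v ∈ G) (hw : w ∈ G)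
    (hx : x ∈ P) (hvu : v ≠ u) (hwv : w ≠ v)
    (h1 : v ∈ openSegment ℝ u w) (h2 : w ∈ openSegment ℝ u x) : False :=
  hvu.symm (hnd x hx u hu v hv v hv w hw hvu hwv (seg_trans h1 h2) (seg_trans' h1 h2))

/-- Two guards on the same open edge of the triangle: impossible. -/
lemma core_same_edge_lt (hnd : NoDouble P G) {X Z e f : Plane} {p1 p3 q1 q3 : ℝ}
    (hXG : X ∈ G) (heG : e ∈ G) (hfG : f ∈ G) (hZP : Z ∈ P)
    (he : e = p1 • X + p3 • Z) (hf : f = q1 • X + q3 • Z)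
    (hp1 : 0 < p1) (hp3 : 0 < p3) (hps : p1 + p3 = 1)
    (hq1 : 0 < q1) (hq3 : 0 < q3) (hqs : q1 + q3 = 1)
    (hlt : q1 < p1) (heX : e ≠ X) (hfe : f ≠ e) : False := by
  have h1 : e ∈ openSegment ℝ X f := by
    refine mk_open' (a := q3 - p3) (b := p3) (by nlinarith) hp3 ?_
    rw [he, hf]; match_scalars <;> nlinarith [hps, hqs]
  have h2 : f ∈ openSegment ℝ X Z := mk_open hq1 hq3 hqs hf
  exact beyond hnd hXG heG hfG hZP heX hfe h1 h2

lemma core_same_edge (hnd : NoDouble P G) {X Z e f : Plane} {p1 p3 q1 q3 : ℝ}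
    (hXG : X ∈ G) (heG : e ∈ G) (hfG : f ∈ G) (hZP : Z ∈ P)
    (he : e = p1 • X + p3 • Z) (hf : f = q1 • X + q3 • Z)
    (hp1 : 0 < p1) (hp3 : 0 < p3) (hps : p1 + p3 = 1)
    (hq1 : 0 < q1) (hq3 : 0 < q3) (hqs : q1 + q3 = 1)
    (heX : e ≠ X) (hfX : f ≠ X) (hef : e ≠ f) : False := by
  rcases lt_trichotomy q1 p1 with h | h | h
  · exact core_same_edge_lt hnd hXG heG hfG hZP he hf hp1 hp3 hps hq1 hq3 hqs h heX hef.symm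
  · apply hef
    have h3 : q3 = p3 := by linarith
    rw [he, hf, h, h3]
  · exact core_same_edge_lt hnd hXG hfG heG hZP hf he hq1 hq3 hqs hp1 hp3 hps h hfX hef

/-- Two guards on two different open edges: impossible. -/
lemma core_diff_edges (hnd : NoDouble P G) {X Y Z e f : Plane} {p1 p3 q1 q2 : ℝ}
    (hXP : X ∈ P) (hYG : Y ∈ G) (hZG : Z ∈ G) (heG : e ∈ G) (hfG : f ∈ G)
    (he : e = p1 • X + p3 • Z) (hp1 : 0 < p1) (hp3 : 0 < p3) (hps : p1 + p3 = 1)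
    (hf : f = q1 • X + q2 • Y) (hq1 : 0 < q1) (hq2 : 0 < q2) (hqs : q1 + q2 = 1)
    (heZ : e ≠ Z) (hfY : f ≠ Y) (hYZ : Y ≠ Z) : False := by
  have h1 : e ∈ openSegment ℝ Z X := mk_open hp3 hp1 (by linarith) (by rw [he]; module)
  have h2 : f ∈ openSegment ℝ Y X := mk_open hq2 hq1 (by linarith) (by rw [hf]; module)
  exact hYZ (hnd X hXP Z hZG e heG Y hYG f hfG heZ hfY h1 h2).symm


lemma core_edge_int (hnd : NoDouble P G) {X Y Z e f : Plane} {p1 p3 q1 q2 q3 : ℝ}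
    (hXG : X ∈ G) (hYG : Y ∈ G) (hZG : Z ∈ G) (heG : e ∈ G) (hfG : f ∈ G)
    (hmem : ∀ α β γ : ℝ, 0 ≤ α → 0 ≤ β → 0 ≤ γ → α + β + γ = 1 → α • X + β • Y + γ • Z ∈ P)
    (he : e = p1 • X + p3 • Z) (hp1 : 0 < p1) (hp3 : 0 < p3) (hps : p1 + p3 = 1)
    (hf : f = q1 • X + q2 • Y + q3 • Z)
    (hq1 : 0 < q1) (hq2 : 0 < q2) (hq3 : 0 < q3) (hqs : q1 + q2 + q3 = 1)
    (heX : e ≠ X) (heZ : e ≠ Z) (hfY : f ≠ Y) (hXY : X ≠ Y) (hZY : Z ≠ Y) :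
    f ∈ openSegment ℝ Y e := by
  have hσ : 0 < q1 + q3 := by positivity
  have hmP : ((q1/(q1+q3)) • X + (q3/(q1+q3)) • Z) ∈ P := by
    have h0 := hmem (q1/(q1+q3)) 0 (q3/(q1+q3)) (by positivity) le_rfl (by positivity)
      (by field_simp; ring)
    simpa using h0
  have hfm : f ∈ openSegment ℝ Y ((q1/(q1+q3)) • X + (q3/(q1+q3)) • Z) := by
    refine mk_open (a := q2) (b := q1+q3) hq2 hσ (by linarith) ?_
    rw [hf]; match_scalars
    · field_simp
    · ring
    · field_simp
  rcases lt_trichotomy (q1*p3) (q3*p1) with hc | hc | hc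
  · exfalso
    have h1 : e ∈ openSegment ℝ X ((q1/(q1+q3)) • X + (q3/(q1+q3)) • Z) := by
      have hapos : 0 < q3 - p3*(q1+q3) := by
        have hxx : q3 - p3*(q1+q3) = q3*p1 - q1*p3 := by linear_combination (-q3) * hps
        rw [hxx]; linarith
      refine mk_open' (a := q3 - p3*(q1+q3)) (b := p3*(q1+q3)) hapos (by positivity) ?_
      rw [he]; match_scalars
      · field_simp; linear_combination q3 * hps
      · field_simp; ring
    exact hXY (hnd _ hmP X hXG e heG Y hYG f hfG heX hfY h1 hfm)
  · refine mk_open (a := q2) (b := q1+q3) hq2 hσ (by linarith) ?_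
    rw [hf, he]; match_scalars
    · linear_combination hc - q1 * hps
    · ring
    · linear_combination (-1) * hc - q3 * hps
  · exfalso
    have h1 : e ∈ openSegment ℝ Z ((q1/(q1+q3)) • X + (q3/(q1+q3)) • Z) := by
      have hapos : 0 < q1 - p1*(q1+q3) := by
        have hxx : q1 - p1*(q1+q3) = q1*p3 - q3*p1 := by linear_combination (-q1) * hps
        rw [hxx]; linarith
      refine mk_open' (a := q1 - p1*(q1+q3)) (b := p1*(q1+q3)) hapos (by positivity) ?_
      rw [he]; match_scalars
      · field_simp; ring
      · field_simp; linear_combination q1 * hps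
    exact hZY (hnd _ hmP Z hZG e heG Y hYG f hfG heZ hfY h1 hfm)


lemma core_collin (hnd : NoDouble P G) {X Y Z e f : Plane} {p1 p2 p3 lam : ℝ}
    (hXG : X ∈ G) (heG : e ∈ G) (hfG : f ∈ G)
    (hmem : ∀ α β γ : ℝ, 0 ≤ α → 0 ≤ β → 0 ≤ γ → α + β + γ = 1 → α • X + β • Y + γ • Z ∈ P)
    (he : e = p1 • X + p2 • Y + p3 • Z)
    (hp1 : 0 < p1) (hp2 : 0 < p2) (hp3 : 0 < p3) (hps : p1 + p2 + p3 = 1)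
    (hf : f = (1-lam) • X + lam • e) (hl0 : 0 < lam) (hl1 : lam < 1)
    (hfX : f ≠ X) (hef : e ≠ f) : False := by
  have hτ : 0 < p2 + p3 := by positivity
  have hmP : ((p2/(p2+p3)) • Y + (p3/(p2+p3)) • Z) ∈ P := by
    have h0 := hmem 0 (p2/(p2+p3)) (p3/(p2+p3)) le_rfl (by positivity) (by positivity)
      (by field_simp; ring)
    simpa using h0
  have h2 : e ∈ openSegment ℝ X ((p2/(p2+p3)) • Y + (p3/(p2+p3)) • Z) := by
    refine mk_open (a := p1) (b := p2+p3) hp1 hτ (by linarith) ?_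
    rw [he]; match_scalars
    · ring
    · field_simp
    · field_simp
  have h1 : f ∈ openSegment ℝ X e := mk_open (by linarith) hl0 (by ring) hf
  exact beyond hnd hXG hfG heG hmP hfX hef h1 h2

lemma core_rule1 (hnd : NoDouble P G) {X Y Z e f : Plane} {p1 p2 p3 q1 q2 q3 : ℝ}
    (hXG : X ∈ G) (hZG : Z ∈ G) (heG : e ∈ G) (hfG : f ∈ G)
    (hmem : ∀ α β γ : ℝ, 0 ≤ α → 0 ≤ β → 0 ≤ γ → α + β + γ = 1 → α • X + β • Y + γ • Z ∈ P)
    (he : e = p1 • X + p2 • Y + p3 • Z)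
    (hp1 : 0 < p1) (hp2 : 0 < p2) (hp3 : 0 < p3) (hps : p1 + p2 + p3 = 1)
    (hf : f = q1 • X + q2 • Y + q3 • Z)
    (hq1 : 0 < q1) (hq2 : 0 < q2) (hq3 : 0 < q3) (hqs : q1 + q2 + q3 = 1)
    (hC : p2*q1 < p1*q2) (hA : p3*q2 < p2*q3)
    (heX : e ≠ X) (hfZ : f ≠ Z) (hXZ : X ≠ Z) : False := by
  have hD : 0 < q2*(p2+p3) + p2*q1 := by positivity
  have hyP : ((p2*q1/(q2*(p2+p3) + p2*q1)) • X + (q2*p2/(q2*(p2+p3) + p2*q1)) • Y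
      + (q2*p3/(q2*(p2+p3) + p2*q1)) • Z) ∈ P := by
    refine hmem _ _ _ (by positivity) (by positivity) (by positivity) (by field_simp; ring)
  have h1 : e ∈ openSegment ℝ X ((p2*q1/(q2*(p2+p3) + p2*q1)) • X
      + (q2*p2/(q2*(p2+p3) + p2*q1)) • Y + (q2*p3/(q2*(p2+p3) + p2*q1)) • Z) := by
    have hapos : 0 < q2 - (q2*(p2+p3) + p2*q1) := by
      have hxx : q2 - (q2*(p2+p3) + p2*q1) = p1*q2 - p2*q1 := by
        linear_combination (-q2) * hps
      rw [hxx]; linarith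
    refine mk_open' (a := q2 - (q2*(p2+p3) + p2*q1)) (b := q2*(p2+p3) + p2*q1) hapos hD ?_
    rw [he]; match_scalars
    · field_simp; linear_combination q2 * hps
    · field_simp; ring
    · field_simp; ring
  have h2 : f ∈ openSegment ℝ Z ((p2*q1/(q2*(p2+p3) + p2*q1)) • X
      + (q2*p2/(q2*(p2+p3) + p2*q1)) • Y + (q2*p3/(q2*(p2+p3) + p2*q1)) • Z) := by
    have hbpos : 0 < p2 - (q2*(p2+p3) + p2*q1) := by
      have hxx : p2 - (q2*(p2+p3) + p2*q1) = p2*q3 - p3*q2 := by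
        linear_combination (-p2) * hqs
      rw [hxx]; linarith
    refine mk_open' (a := p2 - (q2*(p2+p3) + p2*q1)) (b := q2*(p2+p3) + p2*q1) hbpos hD ?_
    rw [hf]; match_scalars
    · field_simp; ring
    · field_simp; ring
    · field_simp; linear_combination p2 * hqs
  exact hXZ (hnd _ hyP X hXG e heG Z hZG f hfG heX hfZ h1 h2)


lemma core_collinX (hnd : NoDouble P G) {X Y Z e f : Plane} {p1 p2 p3 q1 q2 q3 : ℝ}
    (hXG : X ∈ G) (heG : e ∈ G) (hfG : f ∈ G)
    (hmem : ∀ α β γ : ℝ, 0 ≤ α → 0 ≤ β → 0 ≤ γ → α + β + γ = 1 → α • X + β • Y + γ • Z ∈ P)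
    (he : e = p1 • X + p2 • Y + p3 • Z)
    (hp1 : 0 < p1) (hp2 : 0 < p2) (hp3 : 0 < p3) (hps : p1 + p2 + p3 = 1)
    (hf : f = q1 • X + q2 • Y + q3 • Z)
    (hq1 : 0 < q1) (hq2 : 0 < q2) (hq3 : 0 < q3) (hqs : q1 + q2 + q3 = 1)
    (hd : p2*q3 = p3*q2) (heX : e ≠ X) (hfX : f ≠ X) (hef : e ≠ f) : False := by
  rcases lt_trichotomy q2 p2 with hl | hl | hl
  · have hf2 : f = (1 - q2/p2) • X + (q2/p2) • e := by
      rw [hf, he]; match_scalars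
      · field_simp; linear_combination p2 * hqs - q2 * hps - hd
      · field_simp
      · field_simp; linear_combination hd
    exact core_collin hnd hXG heG hfG hmem he hp1 hp2 hp3 hps hf2
      (by positivity) ((div_lt_one hp2).2 hl) hfX hef
  · have h3 : q3 = p3 := by
      rw [hl] at hd
      exact mul_left_cancel₀ hp2.ne' (by linear_combination hd)
    have h1 : q1 = p1 := by linarith
    exact hef (by rw [he, hf, h1, h3, hl])
  · have he2 : e = (1 - p2/q2) • X + (p2/q2) • f := by
      rw [hf, he]; match_scalars
      · field_simp; linear_combination q2 * hps - p2 * hqs + hd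
      · field_simp
      · field_simp; linear_combination - hd
    exact core_collin hnd hXG hfG heG hmem hf hq1 hq2 hq3 hqs he2
      (by positivity) ((div_lt_one hq2).2 hl) heX hef.symm

lemma core_int_int (hnd : NoDouble P G) {X Y Z e f : Plane} {p1 p2 p3 q1 q2 q3 : ℝ}
    (hXG : X ∈ G) (hYG : Y ∈ G) (hZG : Z ∈ G) (heG : e ∈ G) (hfG : f ∈ G)
    (hmem : ∀ α β γ : ℝ, 0 ≤ α → 0 ≤ β → 0 ≤ γ → α + β + γ = 1 → α • X + β • Y + γ • Z ∈ P)
    (he : e = p1 • X + p2 • Y + p3 • Z)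
    (hp1 : 0 < p1) (hp2 : 0 < p2) (hp3 : 0 < p3) (hps : p1 + p2 + p3 = 1)
    (hf : f = q1 • X + q2 • Y + q3 • Z)
    (hq1 : 0 < q1) (hq2 : 0 < q2) (hq3 : 0 < q3) (hqs : q1 + q2 + q3 = 1)
    (hef : e ≠ f)
    (heX : e ≠ X) (heY : e ≠ Y) (heZ : e ≠ Z)
    (hfX : f ≠ X) (hfY : f ≠ Y) (hfZ : f ≠ Z)
    (hXY : X ≠ Y) (hXZ : X ≠ Z) (hYZ : Y ≠ Z) : False := by
  have hmemZXY : ∀ α β γ : ℝ, 0 ≤ α → 0 ≤ β → 0 ≤ γ → α + β + γ = 1 →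
      α • Z + β • X + γ • Y ∈ P := by
    intro α β γ h1 h2 h3 h4
    have h5 := hmem β γ α h2 h3 h1 (by linarith)
    have heq : β • X + γ • Y + α • Z = α • Z + β • X + γ • Y := by module
    rwa [heq] at h5
  have hmemYZX : ∀ α β γ : ℝ, 0 ≤ α → 0 ≤ β → 0 ≤ γ → α + β + γ = 1 →
      α • Y + β • Z + γ • X ∈ P := by
    intro α β γ h1 h2 h3 h4
    have h5 := hmem γ α β h3 h1 h2 (by linarith)
    have heq : γ • X + α • Y + β • Z = α • Y + β • Z + γ • X := by module
    rwa [heq] at h5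
  have heZXY : e = p3 • Z + p1 • X + p2 • Y := by rw [he]; module
  have hfZXY : f = q3 • Z + q1 • X + q2 • Y := by rw [hf]; module
  have heYZX : e = p2 • Y + p3 • Z + p1 • X := by rw [he]; module
  have hfYZX : f = q2 • Y + q3 • Z + q1 • X := by rw [hf]; module
  rcases lt_trichotomy (p1*q2) (p2*q1) with hC | hC | hC
  · -- dC < 0
    rcases lt_trichotomy (p2*q3) (p3*q2) with hA | hA | hA
    · -- dA < 0 : rule1 (X,Y,Z) (f,e)
      exact core_rule1 hnd hXG hZG hfG heG hmem hf hq1 hq2 hq3 hqs he hp1 hp2 hp3 hps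
        (by linarith) (by linarith) hfX heZ hXZ
    · -- dA = 0
      exact core_collinX hnd hXG heG hfG hmem he hp1 hp2 hp3 hps hf hq1 hq2 hq3 hqs
        hA heX hfX hef
    · -- dA > 0, dC < 0: decide by dB
      rcases lt_trichotomy (p3*q1) (p1*q3) with hB | hB | hB
      · -- dB < 0, dC < 0 : frame (Z,X,Y) (f,e): hC' : q1*p3 < q3*p1 (dB<0), hA' : q2*p1 < q1*p2 (dC<0)
        exact core_rule1 hnd hZG hYG hfG heG hmemZXY hfZXY hq3 hq1 hq2 (by linarith)
          heZXY hp3 hp1 hp2 (by linarith) (by linarith) (by linarith) hfZ heY hYZ.symm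
      · -- dB = 0: collin frame (Y,Z,X): hd : p'2*q'3 = p'3*q'2 ⟺ p3*q1 = p1*q3
        exact core_collinX hnd hYG heG hfG hmemYZX heYZX hp2 hp3 hp1 (by linarith)
          hfYZX hq2 hq3 hq1 (by linarith) (by linarith) heY hfY hef
      ·
        exact core_rule1 hnd hYG hXG heG hfG hmemYZX heYZX hp2 hp3 hp1 (by linarith)
          hfYZX hq2 hq3 hq1 (by linarith) (by linarith) (by linarith) heY hfX hXY.symm
  · -- dC = 0: collin frame (Z,X,Y)
    exact core_collinX hnd hZG heG hfG hmemZXY heZXY hp3 hp1 hp2 (by linarith)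
      hfZXY hq3 hq1 hq2 (by linarith) (by linarith) heZ hfZ hef
  · -- dC > 0
    rcases lt_trichotomy (p2*q3) (p3*q2) with hA | hA | hA
    · -- dA < 0, dC > 0: decide by dB
      rcases lt_trichotomy (p3*q1) (p1*q3) with hB | hB | hB
      · -- dB < 0, dA < 0: frame (Y,Z,X) (f,e)
        exact core_rule1 hnd hYG hXG hfG heG hmemYZX hfYZX hq2 hq3 hq1 (by linarith)
          heYZX hp2 hp3 hp1 (by linarith) (by linarith) (by linarith) hfY heX hXY.symm
      · exact core_collinX hnd hYG heG hfG hmemYZX heYZX hp2 hp3 hp1 (by linarith)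
          hfYZX hq2 hq3 hq1 (by linarith) (by linarith) heY hfY hef
      · -- dB > 0, dC > 0: frame (Z,X,Y) (e,f)
        exact core_rule1 hnd hZG hYG heG hfG hmemZXY heZXY hp3 hp1 hp2 (by linarith)
          hfZXY hq3 hq1 hq2 (by linarith) (by linarith) (by linarith) heZ hfY hYZ.symm
    · exact core_collinX hnd hXG heG hfG hmem he hp1 hp2 hp3 hps hf hq1 hq2 hq3 hqs
        hA heX hfX hef
    · -- dA > 0, dC > 0: rule1 (X,Y,Z) (e,f)
      exact core_rule1 hnd hXG hZG heG hfG hmem he hp1 hp2 hp3 hps hf hq1 hq2 hq3 hqs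
        hC hA heX hfZ hXZ


lemma frontier_seg (hnd : NoDouble P G) (hPc : IsClosed P) (hPcv : Convex ℝ P)
    {a b c g4 g5 : Plane} (hbG : b ∈ G) (h4G : g4 ∈ G) (h5G : g5 ∈ G)
    (haP : a ∈ P) (hcP : c ∈ P)
    (h4 : g4 ∈ openSegment ℝ a c) (h5 : g5 ∈ openSegment ℝ b g4) (hb4 : b ≠ g4) :
    segment ℝ a c ⊆ frontier P := by
  have h5b : g5 ≠ b := open_ne_left hb4 h5
  have h54 : g5 ≠ g4 := open_ne_right hb4 h5
  intro z hz
  obtain ⟨u1, u2, hu1, hu2, hus, hz'⟩ := hz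
  have hz' : z = u1 • a + u2 • c := hz'.symm
  obtain ⟨w1, w2, hw1, hw2, hws, h4'⟩ := open_coeffs h4
  have hzP : z ∈ P := by
    rw [hz']
    exact hPcv haP hcP hu1 hu2 hus
  rw [hPc.frontier_eq]
  refine ⟨hzP, fun hzint => ?_⟩
  have h4int : g4 ∈ interior P := by
    rcases lt_trichotomy u2 w2 with h | h | h
    · have hd : 0 < 1 - u2 := by linarith
      have heq : g4 = ((1-w2)/(1-u2)) • z + ((w2-u2)/(1-u2)) • c := by
        rw [h4', hz']; match_scalars
        · field_simp; linear_combination (w2-1) * hus + (1-u2) * hws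
        · field_simp; ring
      rw [heq]
      exact hPcv.combo_interior_closure_mem_interior hzint (subset_closure hcP)
        (div_pos (by linarith) hd) (div_nonneg (by linarith) hd.le)
        (by rw [← add_div, div_eq_one_iff_eq hd.ne']; ring)
    · have h1 : u1 = w1 := by linarith
      have : z = g4 := by rw [hz', h4', h1, h]
      rwa [← this]
    · have hd : 0 < u2 := by linarith
      have heq : g4 = (w2/u2) • z + ((u2-w2)/u2) • a := by
        rw [h4', hz']; match_scalars
        · field_simp; linear_combination (-w2) * hus + u2 * hws
        · field_simp
      rw [heq]
      exact hPcv.combo_interior_closure_mem_interior hzint (subset_closure haP)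
        (div_pos hw2 hd) (div_nonneg (by linarith) hd.le)
        (by rw [← add_div, div_eq_one_iff_eq hd.ne']; ring)
  obtain ⟨ε, hε, hball⟩ := Metric.isOpen_iff.mp isOpen_interior g4 h4int
  have hng : (0:ℝ) < ‖g4 - b‖ := by
    rw [norm_pos_iff, sub_ne_zero]; exact hb4.symm
  have ht : 0 < ε / (2 * ‖g4 - b‖) := by positivity
  have hxP : g4 + (ε / (2 * ‖g4 - b‖)) • (g4 - b) ∈ P := by
    apply interior_subset
    apply hball
    rw [Metric.mem_ball, dist_eq_norm,
      show g4 + (ε / (2 * ‖g4 - b‖)) • (g4 - b) - g4 = (ε / (2 * ‖g4 - b‖)) • (g4 - b) by module,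
      norm_smul, Real.norm_eq_abs, abs_of_pos ht]
    have hxx : ε / (2 * ‖g4 - b‖) * ‖g4 - b‖ = ε/2 := by field_simp
    rw [hxx]; linarith
  have h4x : g4 ∈ openSegment ℝ b (g4 + (ε / (2 * ‖g4 - b‖)) • (g4 - b)) := by
    refine mk_open' (a := ε / (2 * ‖g4 - b‖)) (b := 1) ht one_pos ?_
    module
  exact h5b (hnd _ hxP b hbG g5 h5G g5 h5G g4 h4G h5b h54.symm
    (seg_trans h5 h4x) (seg_trans' h5 h4x)).symm


lemma combo_mem {g1 g2 g3 : Plane} {α β γ : ℝ} (hα : 0 ≤ α) (hβ : 0 ≤ β) (hγ : 0 ≤ γ)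
    (hs : α + β + γ = 1) :
    α • g1 + β • g2 + γ • g3 ∈ convexHull ℝ ({g1, g2, g3} : Set Plane) := by
  have h1 : g1 ∈ convexHull ℝ ({g1,g2,g3} : Set Plane) := subset_convexHull ℝ _ (by simp)
  have h2 : g2 ∈ convexHull ℝ ({g1,g2,g3} : Set Plane) := subset_convexHull ℝ _ (by simp)
  have h3 : g3 ∈ convexHull ℝ ({g1,g2,g3} : Set Plane) := subset_convexHull ℝ _ (by simp)
  have hcx := convex_convexHull ℝ ({g1,g2,g3} : Set Plane)
  rcases eq_or_lt_of_le (by positivity : (0:ℝ) ≤ β + γ) with h | h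
  · have hβ0 : β = 0 := by linarith
    have hγ0 : γ = 0 := by linarith
    have hα1 : α = 1 := by linarith
    rw [hβ0, hγ0, hα1]; simpa using h1
  · have hq := hcx h2 h3 (div_nonneg hβ h.le) (div_nonneg hγ h.le)
      (by rw [← add_div, div_eq_one_iff_eq h.ne'])
    have hfin := hcx h1 hq hα h.le (by linarith)
    have heq : α • g1 + β • g2 + γ • g3
        = α • g1 + (β+γ) • ((β/(β+γ)) • g2 + (γ/(β+γ)) • g3) := by
      match_scalars
      · ring
      · field_simp
      · field_simp
    rw [heq]; exact hfin

lemma exists_coords {g1 g2 g3 x : Plane} (hx : x ∈ convexHull ℝ ({g1,g2,g3} : Set Plane)) :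
    ∃ α β γ : ℝ, 0 ≤ α ∧ 0 ≤ β ∧ 0 ≤ γ ∧ α + β + γ = 1 ∧ x = α • g1 + β • g2 + γ • g3 := by
  rw [show ({g1,g2,g3} : Set Plane) = insert g1 {g2,g3} from rfl,
    convexHull_insert (by exact ⟨g2, by simp⟩), convexHull_pair] at hx
  rw [mem_convexJoin] at hx
  obtain ⟨p, hp, q, hq, hx⟩ := hx
  rw [mem_singleton_iff] at hp
  subst hp
  obtain ⟨c, d, hc, hd, hcd, hq⟩ := hq
  obtain ⟨s, t, hs, ht, hst, hx⟩ := hx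
  exact ⟨s, t*c, t*d, hs, by positivity, by positivity, by nlinarith,
    by rw [← hx, ← hq]; module⟩

lemma unique3 {g1 g2 g3 : Plane} (haff : AffineIndependent ℝ ![g1,g2,g3])
    {a b c a' b' c' : ℝ} (hs : a + b + c = 1) (hs' : a' + b' + c' = 1)
    (heq : a • g1 + b • g2 + c • g3 = a' • g1 + b' • g2 + c' • g3) :
    a = a' ∧ b = b' ∧ c = c' := by
  have hsum : ∑ i, (![a,b,c]) i = 1 := by simp [Fin.sum_univ_three]; linarith
  have hsum' : ∑ i, (![a',b',c']) i = 1 := by simp [Fin.sum_univ_three]; linarith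
  have h := (affineIndependent_iff_eq_of_fintype_affineCombination_eq ℝ ![g1,g2,g3]).mp
    haff ![a,b,c] ![a',b',c'] hsum hsum' ?_
  · exact ⟨by simpa using congrFun h 0, by simpa using congrFun h 1, by simpa using congrFun h 2⟩
  · rw [Finset.affineCombination_eq_linear_combination _ _ _ hsum,
      Finset.affineCombination_eq_linear_combination _ _ _ hsum']
    simpa [Fin.sum_univ_three] using heq

lemma classify {g1 g2 g3 x : Plane} (hx : x ∈ convexHull ℝ ({g1,g2,g3} : Set Plane))
    (h1 : x ≠ g1) (h2 : x ≠ g2) (h3 : x ≠ g3) :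
    (x ∈ openSegment ℝ g1 g2 ∨ x ∈ openSegment ℝ g1 g3 ∨ x ∈ openSegment ℝ g2 g3) ∨
    (∃ α β γ : ℝ, 0 < α ∧ 0 < β ∧ 0 < γ ∧ α + β + γ = 1 ∧ x = α • g1 + β • g2 + γ • g3) := by
  obtain ⟨a, b, c, ha, hb, hc, hs, hxe⟩ := exists_coords hx
  rcases eq_or_lt_of_le ha with ha0 | ha0 <;>
    rcases eq_or_lt_of_le hb with hb0 | hb0 <;>
      rcases eq_or_lt_of_le hc with hc0 | hc0
  · exfalso; rw [← ha0, ← hb0, ← hc0] at hs; norm_num at hs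
  · exfalso; apply h3
    rw [hxe, ← ha0, ← hb0, show c = 1 by linarith]; simp
  · exfalso; apply h2
    rw [hxe, ← ha0, ← hc0, show b = 1 by linarith]; simp
  · left; right; right
    exact mk_open hb0 hc0 (by linarith) (by rw [hxe, ← ha0]; simp)
  · exfalso; apply h1
    rw [hxe, ← hb0, ← hc0, show a = 1 by linarith]; simp
  · left; right; left
    exact mk_open ha0 hc0 (by linarith) (by rw [hxe, ← hb0]; simp)
  · left; left
    exact mk_open ha0 hb0 (by linarith) (by rw [hxe, ← hc0]; simp)
  · right; exact ⟨a, b, c, ha0, hb0, hc0, hs, hxe⟩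


lemma not_both_edge (hnd : NoDouble P G) (hG : ↑G ⊆ P) {g1 g2 g3 e f : Plane}
    (hg1 : g1 ∈ G) (hg2 : g2 ∈ G) (hg3 : g3 ∈ G) (heG : e ∈ G) (hfG : f ∈ G)
    (h12 : g1 ≠ g2) (h13 : g1 ≠ g3) (h23 : g2 ≠ g3)
    (he1 : e ≠ g1) (he2 : e ≠ g2) (he3 : e ≠ g3)
    (hf1 : f ≠ g1) (hf2 : f ≠ g2) (hf3 : f ≠ g3) (hef : e ≠ f)
    (hEe : e ∈ openSegment ℝ g1 g2 ∨ e ∈ openSegment ℝ g1 g3 ∨ e ∈ openSegment ℝ g2 g3)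
    (hEf : f ∈ openSegment ℝ g1 g2 ∨ f ∈ openSegment ℝ g1 g3 ∨ f ∈ openSegment ℝ g2 g3) :
    False := by
  have same : ∀ {X Z u v : Plane}, X ∈ G → Z ∈ G → u ∈ G → v ∈ G → u ≠ X → v ≠ X →
      u ≠ v → u ∈ openSegment ℝ X Z → v ∈ openSegment ℝ X Z → False := by
    intro X Z u v hX hZ hu hv huX hvX huv hu' hv'
    obtain ⟨p1, p3, hp1, hp3, hps, heu⟩ := open_coeffs hu'
    obtain ⟨q1, q3, hq1, hq3, hqs, hev⟩ := open_coeffs hv'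
    exact core_same_edge hnd hX hu hv (hG hZ) heu hev hp1 hp3 hps hq1 hq3 hqs huX hvX huv
  have diff : ∀ {X Y Z u v : Plane}, X ∈ G → Y ∈ G → Z ∈ G → u ∈ G → v ∈ G →
      u ≠ Z → v ≠ Y → Y ≠ Z →
      u ∈ openSegment ℝ X Z → v ∈ openSegment ℝ X Y → False := by
    intro X Y Z u v hX hY hZ hu hv huZ hvY hYZ hu' hv'
    obtain ⟨p1, p3, hp1, hp3, hps, heu⟩ := open_coeffs hu'
    obtain ⟨q1, q2, hq1, hq2, hqs, hev⟩ := open_coeffs hv'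
    exact core_diff_edges hnd (hG hX) hY hZ hu hv heu hp1 hp3 hps hev hq1 hq2 hqs huZ hvY hYZ
  have s21 : openSegment ℝ g1 g2 = openSegment ℝ g2 g1 := openSegment_symm ℝ g1 g2
  have s31 : openSegment ℝ g1 g3 = openSegment ℝ g3 g1 := openSegment_symm ℝ g1 g3
  have s32 : openSegment ℝ g2 g3 = openSegment ℝ g3 g2 := openSegment_symm ℝ g2 g3
  rcases hEe with he' | he' | he' <;> rcases hEf with hf' | hf' | hf'
  · exact same hg1 hg2 heG hfG he1 hf1 hef he' hf'
  · exact diff hg1 hg3 hg2 heG hfG he2 hf3 h23.symm he' hf'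
  · exact diff hg2 hg3 hg1 heG hfG he1 hf3 (Ne.symm h13) (s21 ▸ he') hf'
  · exact diff hg1 hg2 hg3 heG hfG he3 hf2 h23 he' hf'
  · exact same hg1 hg3 heG hfG he1 hf1 hef he' hf'
  · exact diff hg3 hg2 hg1 heG hfG he1 hf2 h12.symm (s31 ▸ he') (s32 ▸ hf')
  · exact diff hg2 hg1 hg3 heG hfG he3 hf1 h13 he' (s21 ▸ hf')
  · exact diff hg3 hg1 hg2 heG hfG he2 hf1 h12 (s32 ▸ he') (s31 ▸ hf')
  · exact same hg2 hg3 heG hfG he2 hf2 hef he' hf'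

lemma not_both_int (hnd : NoDouble P G) {g1 g2 g3 e f : Plane}
    (hg1 : g1 ∈ G) (hg2 : g2 ∈ G) (hg3 : g3 ∈ G) (heG : e ∈ G) (hfG : f ∈ G)
    (hmem : ∀ α β γ : ℝ, 0 ≤ α → 0 ≤ β → 0 ≤ γ → α + β + γ = 1 → α • g1 + β • g2 + γ • g3 ∈ P)
    (h12 : g1 ≠ g2) (h13 : g1 ≠ g3) (h23 : g2 ≠ g3)
    (he1 : e ≠ g1) (he2 : e ≠ g2) (he3 : e ≠ g3)
    (hf1 : f ≠ g1) (hf2 : f ≠ g2) (hf3 : f ≠ g3) (hef : e ≠ f)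
    (hIe : ∃ α β γ : ℝ, 0 < α ∧ 0 < β ∧ 0 < γ ∧ α + β + γ = 1 ∧ e = α • g1 + β • g2 + γ • g3)
    (hIf : ∃ α β γ : ℝ, 0 < α ∧ 0 < β ∧ 0 < γ ∧ α + β + γ = 1 ∧ f = α • g1 + β • g2 + γ • g3) :
    False := by
  obtain ⟨p1, p2, p3, hp1, hp2, hp3, hps, he⟩ := hIe
  obtain ⟨q1, q2, q3, hq1, hq2, hq3, hqs, hf'⟩ := hIf
  exact core_int_int hnd hg1 hg2 hg3 heG hfG hmem he hp1 hp2 hp3 hps hf' hq1 hq2 hq3 hqs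
    hef he1 he2 he3 hf1 hf2 hf3 h12 h13 h23


lemma build (hnd : NoDouble P G) (hG : ↑G ⊆ P) (hPc : IsClosed P) (hPcv : Convex ℝ P)
    {g1 g2 g3 ee ii : Plane} (haff : AffineIndependent ℝ ![g1,g2,g3])
    (hg1 : g1 ∈ G) (hg2 : g2 ∈ G) (hg3 : g3 ∈ G) (heG : ee ∈ G) (hiG : ii ∈ G)
    (hmem : ∀ α β γ : ℝ, 0 ≤ α → 0 ≤ β → 0 ≤ γ → α + β + γ = 1 → α • g1 + β • g2 + γ • g3 ∈ P)
    (h12 : g1 ≠ g2) (h13 : g1 ≠ g3) (h23 : g2 ≠ g3)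
    (he1 : ee ≠ g1) (he2 : ee ≠ g2) (he3 : ee ≠ g3)
    (hi1 : ii ≠ g1) (hi2 : ii ≠ g2) (hi3 : ii ≠ g3)
    (hEe : ee ∈ openSegment ℝ g1 g2 ∨ ee ∈ openSegment ℝ g1 g3 ∨ ee ∈ openSegment ℝ g2 g3)
    (hIi : ∃ α β γ : ℝ, 0 < α ∧ 0 < β ∧ 0 < γ ∧ α + β + γ = 1 ∧ ii = α • g1 + β • g2 + γ • g3) :
    ∃ a b c : Plane, ({a,b,c} : Set Plane) = ({g1,g2,g3} : Set Plane) ∧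
      ee ∈ openSegment ℝ a c ∧ ii ∈ openSegment ℝ b ee ∧ segment ℝ a c ⊆ frontier P := by
  obtain ⟨q1, q2, q3, hq1, hq2, hq3, hqs, hi⟩ := hIi
  have hmem132 : ∀ α β γ : ℝ, 0 ≤ α → 0 ≤ β → 0 ≤ γ → α + β + γ = 1 →
      α • g1 + β • g3 + γ • g2 ∈ P := by
    intro α β γ ha hb hc hs
    have h5 := hmem α γ β ha hc hb (by linarith)
    have heq : α • g1 + γ • g2 + β • g3 = α • g1 + β • g3 + γ • g2 := by module
    rwa [heq] at h5
  have hmem213 : ∀ α β γ : ℝ, 0 ≤ α → 0 ≤ β → 0 ≤ γ → α + β + γ = 1 →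
      α • g2 + β • g1 + γ • g3 ∈ P := by
    intro α β γ ha hb hc hs
    have h5 := hmem β α γ hb ha hc (by linarith)
    have heq : β • g1 + α • g2 + γ • g3 = α • g2 + β • g1 + γ • g3 := by module
    rwa [heq] at h5
  rcases hEe with he' | he' | he'
  · -- ee on edge (g1,g2); frame (g1,g3,g2); b := g3
    obtain ⟨p1, p3, hp1, hp3, hps, heq⟩ := open_coeffs he'
    have hi' : ii = q1 • g1 + q3 • g3 + q2 • g2 := by rw [hi]; module
    have hres : ii ∈ openSegment ℝ g3 ee :=
      core_edge_int hnd hg1 hg3 hg2 heG hiG hmem132 heq hp1 hp3 hps hi'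
        hq1 hq3 hq2 (by linarith) he1 he2 hi3 h13 h23
    have hb4 : g3 ≠ ee := by
      intro hh
      have h0 : (0:ℝ) • g1 + (0:ℝ) • g2 + (1:ℝ) • g3 = p1 • g1 + p3 • g2 + (0:ℝ) • g3 := by
        rw [hh, heq]; module
      have hu := unique3 haff (by norm_num) (by linarith) h0
      norm_num at hu
    exact ⟨g1, g3, g2, by ext w; simp; tauto, he', hres,
      frontier_seg hnd hPc hPcv hg3 heG hiG (hG hg1) (hG hg2) he' hres hb4⟩
  · -- ee on edge (g1,g3); frame (g1,g2,g3); b := g2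
    obtain ⟨p1, p3, hp1, hp3, hps, heq⟩ := open_coeffs he'
    have hres : ii ∈ openSegment ℝ g2 ee :=
      core_edge_int hnd hg1 hg2 hg3 heG hiG hmem heq hp1 hp3 hps hi
        hq1 hq2 hq3 hqs he1 he3 hi2 h12 h23.symm
    have hb4 : g2 ≠ ee := by
      intro hh
      have h0 : (0:ℝ) • g1 + (1:ℝ) • g2 + (0:ℝ) • g3 = p1 • g1 + (0:ℝ) • g2 + p3 • g3 := by
        rw [hh, heq]; module
      have hu := unique3 haff (by norm_num) (by linarith) h0
      norm_num at hu
    exact ⟨g1, g2, g3, rfl, he', hres,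
      frontier_seg hnd hPc hPcv hg2 heG hiG (hG hg1) (hG hg3) he' hres hb4⟩
  · -- ee on edge (g2,g3); frame (g2,g1,g3); b := g1
    obtain ⟨p1, p3, hp1, hp3, hps, heq⟩ := open_coeffs he'
    have hi' : ii = q2 • g2 + q1 • g1 + q3 • g3 := by rw [hi]; module
    have hres : ii ∈ openSegment ℝ g1 ee :=
      core_edge_int hnd hg2 hg1 hg3 heG hiG hmem213 heq hp1 hp3 hps hi'
        hq2 hq1 hq3 (by linarith) he2 he3 hi1 h12.symm h13.symm
    have hb4 : g1 ≠ ee := by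
      intro hh
      have h0 : (1:ℝ) • g1 + (0:ℝ) • g2 + (0:ℝ) • g3 = (0:ℝ) • g1 + p1 • g2 + p3 • g3 := by
        rw [hh, heq]; module
      have hu := unique3 haff (by norm_num) (by linarith) h0
      norm_num at hu
    exact ⟨g2, g1, g3, by ext w; simp; tauto, he', hres,
      frontier_seg hnd hPc hPcv hg1 heG hiG (hG hg2) (hG hg3) he' hres hb4⟩


end S10

/-- Triangle Lemma: If no point of the convex n-gon P is hidden from
two distinct guards, and T is a closed triangle with guards at its corners, then T
contains at most 5 guards; and if exactly 5, then (after relabeling the corners) the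
two extra guards g4, g5 satisfy: g4 is strictly between corners a and c, g5 is
strictly between corner b and g4, and the segment from a to c lies on the boundary
of P. -/
theorem statement10 (n : ℕ) (V : Finset Plane) (P : Set Plane)
    (hP : IsConvexPolygon n V P) (G : Finset Plane) (hG : ↑G ⊆ P)
    (hno2 : ∀ x ∈ P, ∀ g ∈ G, ∀ g' ∈ G, Hidden G g x → Hidden G g' x → g = g')
    (g1 g2 g3 : Plane) (hg1 : g1 ∈ G) (hg2 : g2 ∈ G) (hg3 : g3 ∈ G)
    (haff : AffineIndependent ℝ ![g1, g2, g3]) :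
    ((↑G : Set Plane) ∩ convexHull ℝ {g1, g2, g3}).ncard ≤ 5 ∧
    (((↑G : Set Plane) ∩ convexHull ℝ {g1, g2, g3}).ncard = 5 →
      ∃ a b c g4 g5 : Plane,
        ({a, b, c} : Set Plane) = {g1, g2, g3} ∧ g4 ≠ g5 ∧
        ((↑G : Set Plane) ∩ convexHull ℝ {g1, g2, g3}) \ {a, b, c} = {g4, g5} ∧
        g4 ∈ openSegment ℝ a c ∧ g5 ∈ openSegment ℝ b g4 ∧
        segment ℝ a c ⊆ frontier P) := by
  classical
  obtain ⟨-, -, hPV, -⟩ := hP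
  have hPcv : Convex ℝ P := hPV ▸ convex_convexHull ℝ _
  have hPc : IsClosed P := hPV ▸ (Set.Finite.isCompact_convexHull ℝ V.finite_toSet).isClosed
  have hnd : S10.NoDouble P G := fun x hx u hu v hv u' hu' v' hv' hvu hv'u' hs1 hs2 =>
    hno2 x hx u hu u' hu' ⟨v, hv, hvu, hs1⟩ ⟨v', hv', hv'u', hs2⟩
  have hinj := haff.injective
  have h12 : g1 ≠ g2 := by
    intro h
    have : (0 : Fin 3) = 1 := hinj (by simpa using h)
    exact absurd this (by decide)
  have h13 : g1 ≠ g3 := by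
    intro h
    have : (0 : Fin 3) = 2 := hinj (by simpa using h)
    exact absurd this (by decide)
  have h23 : g2 ≠ g3 := by
    intro h
    have : (1 : Fin 3) = 2 := hinj (by simpa using h)
    exact absurd this (by decide)
  set T := convexHull ℝ ({g1, g2, g3} : Set Plane) with hTdef
  have hTP : T ⊆ P := by
    apply convexHull_min ?_ hPcv
    intro w hw
    simp only [Set.mem_insert_iff, Set.mem_singleton_iff] at hw
    rcases hw with rfl | rfl | rfl
    · exact hG hg1
    · exact hG hg2
    · exact hG hg3
  have hmem : ∀ α β γ : ℝ, 0 ≤ α → 0 ≤ β → 0 ≤ γ → α + β + γ = 1 →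
      α • g1 + β • g2 + γ • g3 ∈ P := fun α β γ ha hb hc hs =>
    hTP (S10.combo_mem ha hb hc hs)
  set S := (↑G : Set Plane) ∩ T with hSdef
  have hSfin : S.Finite := G.finite_toSet.inter_of_left T
  have hsub : ({g1, g2, g3} : Set Plane) ⊆ S := by
    intro w hw
    refine ⟨?_, subset_convexHull ℝ _ hw⟩
    simp only [Set.mem_insert_iff, Set.mem_singleton_iff] at hw
    rcases hw with rfl | rfl | rfl <;> [exact hg1; exact hg2; exact hg3]
  have hc3 : ({g1, g2, g3} : Set Plane).ncard = 3 := by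
    rw [Set.ncard_insert_of_notMem (by simp [h12, h13]),
      Set.ncard_insert_of_notMem (by simp [h23]), Set.ncard_singleton]
  set E := S \ ({g1, g2, g3} : Set Plane) with hEdef
  have hEfin : E.Finite := hSfin.subset Set.diff_subset
  have hkey : E.ncard + 3 = S.ncard := by
    rw [← hc3]
    exact Set.ncard_diff_add_ncard_of_subset hsub hSfin
  have hEfact : ∀ x ∈ E, x ∈ G ∧ x ∈ T ∧ x ≠ g1 ∧ x ≠ g2 ∧ x ≠ g3 := by
    intro x hx
    obtain ⟨⟨hxG, hxT⟩, hxn⟩ := hx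
    simp only [Set.mem_insert_iff, Set.mem_singleton_iff] at hxn
    push_neg at hxn
    exact ⟨hxG, hxT, hxn.1, hxn.2.1, hxn.2.2⟩
  have hclass : ∀ x ∈ E,
      (x ∈ openSegment ℝ g1 g2 ∨ x ∈ openSegment ℝ g1 g3 ∨ x ∈ openSegment ℝ g2 g3) ∨
      (∃ α β γ : ℝ, 0 < α ∧ 0 < β ∧ 0 < γ ∧ α + β + γ = 1 ∧ x = α • g1 + β • g2 + γ • g3) := by
    intro x hx
    obtain ⟨hxG, hxT, hx1, hx2, hx3⟩ := hEfact x hx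
    exact S10.classify hxT hx1 hx2 hx3
  have hNE : ∀ x ∈ E, ∀ y ∈ E, x ≠ y →
      (x ∈ openSegment ℝ g1 g2 ∨ x ∈ openSegment ℝ g1 g3 ∨ x ∈ openSegment ℝ g2 g3) →
      (y ∈ openSegment ℝ g1 g2 ∨ y ∈ openSegment ℝ g1 g3 ∨ y ∈ openSegment ℝ g2 g3) →
      False := by
    intro x hx y hy hxy hEx hEy
    obtain ⟨hxG, hxT, hx1, hx2, hx3⟩ := hEfact x hx
    obtain ⟨hyG, hyT, hy1, hy2, hy3⟩ := hEfact y hy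
    exact S10.not_both_edge hnd hG hg1 hg2 hg3 hxG hyG h12 h13 h23
      hx1 hx2 hx3 hy1 hy2 hy3 hxy hEx hEy
  have hNI : ∀ x ∈ E, ∀ y ∈ E, x ≠ y →
      (∃ α β γ : ℝ, 0 < α ∧ 0 < β ∧ 0 < γ ∧ α + β + γ = 1 ∧ x = α • g1 + β • g2 + γ • g3) →
      (∃ α β γ : ℝ, 0 < α ∧ 0 < β ∧ 0 < γ ∧ α + β + γ = 1 ∧ y = α • g1 + β • g2 + γ • g3) →
      False := by
    intro x hx y hy hxy hIx hIy
    obtain ⟨hxG, hxT, hx1, hx2, hx3⟩ := hEfact x hx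
    obtain ⟨hyG, hyT, hy1, hy2, hy3⟩ := hEfact y hy
    exact S10.not_both_int hnd hg1 hg2 hg3 hxG hyG hmem h12 h13 h23
      hx1 hx2 hx3 hy1 hy2 hy3 hxy hIx hIy
  have hE2 : E.ncard ≤ 2 := by
    by_contra hgt
    push_neg at hgt
    obtain ⟨e, heE⟩ := Set.nonempty_of_ncard_ne_zero (by omega : E.ncard ≠ 0)
    have hn1 : (E \ {e}).ncard = E.ncard - 1 := Set.ncard_diff_singleton_of_mem heE
    obtain ⟨f, hfE1⟩ := Set.nonempty_of_ncard_ne_zero (by omega : (E \ {e}).ncard ≠ 0)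
    have hfE : f ∈ E := hfE1.1
    have hfe : f ≠ e := by simpa using hfE1.2
    have hn2 : ((E \ {e}) \ {f}).ncard = (E \ {e}).ncard - 1 :=
      Set.ncard_diff_singleton_of_mem hfE1
    obtain ⟨h, hhE1⟩ := Set.nonempty_of_ncard_ne_zero
      (by omega : ((E \ {e}) \ {f}).ncard ≠ 0)
    have hhE : h ∈ E := hhE1.1.1
    have hhe : h ≠ e := by simpa using hhE1.1.2
    have hhf : h ≠ f := by simpa using hhE1.2
    rcases hclass e heE with He | He <;> rcases hclass f hfE with Hf | Hf <;>
      rcases hclass h hhE with Hh | Hh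
    · exact hNE e heE f hfE hfe.symm He Hf
    · exact hNE e heE f hfE hfe.symm He Hf
    · exact hNE e heE h hhE hhe.symm He Hh
    · exact hNI f hfE h hhE hhf.symm Hf Hh
    · exact hNE f hfE h hhE hhf.symm Hf Hh
    · exact hNI e heE h hhE hhe.symm He Hh
    · exact hNI e heE f hfE hfe.symm He Hf
    · exact hNI e heE f hfE hfe.symm He Hf
  constructor
  · omega
  · intro h5
    have hE2' : E.ncard = 2 := by omega
    obtain ⟨x, y, hxy, hExy⟩ := Set.ncard_eq_two.mp hE2'
    have hxE : x ∈ E := by rw [hExy]; exact Set.mem_insert x {y}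
    have hyE : y ∈ E := by rw [hExy]; simp
    obtain ⟨hxG, hxT, hx1, hx2, hx3⟩ := hEfact x hxE
    obtain ⟨hyG, hyT, hy1, hy2, hy3⟩ := hEfact y hyE
    rcases hclass x hxE with Hx | Hx <;> rcases hclass y hyE with Hy | Hy
    · exact absurd (hNE x hxE y hyE hxy Hx Hy) not_false
    · -- x edge, y interior
      obtain ⟨a, b, c, hset, h4seg, h5seg, hfr⟩ :=
        S10.build hnd hG hPc hPcv haff hg1 hg2 hg3 hxG hyG hmem h12 h13 h23
          hx1 hx2 hx3 hy1 hy2 hy3 Hx Hy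
      refine ⟨a, b, c, x, y, hset, hxy, ?_, h4seg, h5seg, hfr⟩
      rw [show ({a,b,c} : Set Plane) = ({g1,g2,g3} : Set Plane) from hset]
      exact hExy
    · -- y edge, x interior
      obtain ⟨a, b, c, hset, h4seg, h5seg, hfr⟩ :=
        S10.build hnd hG hPc hPcv haff hg1 hg2 hg3 hyG hxG hmem h12 h13 h23
          hy1 hy2 hy3 hx1 hx2 hx3 Hy Hx
      refine ⟨a, b, c, y, x, hset, hxy.symm, ?_, h4seg, h5seg, hfr⟩
      rw [show ({a,b,c} : Set Plane) = ({g1,g2,g3} : Set Plane) from hset,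
        Set.pair_comm y x]
      exact hExy
    · exact absurd (hNI x hxE y hyE hxy Hx Hy) not_false
end
end
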